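/- arXiv:1507.07910 — 3 statements merged into one kernel-verified Lean document; each statement's English description precedes it below -/
import Mathlib

section
/- Fix ℓ ∈ ℤ and an environment e. If ‖f_{iℓ}(e)‖ = 1 for some i < ℓ, then ‖f_{iℓ}(e)‖ = 1 for every i < ℓ; similarly, if ‖f_{iℓ}(e)‖ = 1 for some i > ℓ, then ‖f_{iℓ}(e)‖ = 1 for every i > ℓ. Suppose in addition that the Markov chain G_n on {1,…,m} with transition matrix Q is irreducible. If P^e_{αi}(τ_ℓ < ∞) = 1 for a.e. e for some α ∈ {1,…,m} and some i < ℓ, then P^e_{αi}(τ_ℓ < ∞) = 1 for a.e. e for every α ∈ {1,…,m} and every i < ℓ; and if P^e_{αi}(τ_ℓ < ∞) = 1 for a.e. e for some α and some i > ℓ, then P^e_{αi}(τ_ℓ < ∞) = 1 for a.e. e for every α ∈ {1,…,m} and every i > ℓ. -/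
open MeasureTheory Filter Matrix
open scoped ENNReal Topology

namespace Parrondo

/-- One-step transition probability of the regime-switching random walk:
`P_{αi,βj} = Q_{αβ} P^{(β)}_{ij}` with `P^{(β)}_{i,i+1} = p^{(β)}_i`,
`P^{(β)}_{i,i-1} = 1 - p^{(β)}_i`. -/
noncomputable def step {ι : Type*} (Q : Matrix ι ι ℝ) (p : ι → ℤ → ℝ) (s s' : ι × ℤ) : ℝ :=
  Q s.1 s'.1 *
    (if s'.2 = s.2 + 1 then p s'.1 s.2
     else if s'.2 = s.2 - 1 then 1 - p s'.1 s.2 else 0)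

/-- `μ α i` is the quenched law of the regime-switching walk `(G_n, X_n)` started at `(α, i)`,
characterized by its values on cylinder sets. -/
def IsQuenchedLaw {ι : Type*} [DecidableEq ι] [MeasurableSpace ι]
    (Q : Matrix ι ι ℝ) (p : ι → ℤ → ℝ) (μ : ι → ℤ → Measure (ℕ → ι × ℤ)) : Prop :=
  ∀ (α : ι) (i : ℤ),
    IsProbabilityMeasure (μ α i) ∧
    ∀ (n : ℕ) (traj : ℕ → ι × ℤ),
      μ α i {ω | ∀ k ≤ n, ω k = traj k} =
        (if traj 0 = (α, i) then 1 else 0) *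
          ENNReal.ofReal (∏ k ∈ Finset.range n, step Q p (traj k) (traj (k + 1)))

/-- The event `{τ_ℓ < ∞}` where `τ_ℓ = inf {n ≥ 1 : X_n = ℓ}`. -/
def hitEvent {ι : Type*} (ℓ : ℤ) : Set (ℕ → ι × ℤ) := {ω | ∃ n : ℕ, 1 ≤ n ∧ (ω n).2 = ℓ}

/-- The event `{τ_ℓ < ∞, G_{τ_ℓ} = β}`. -/
def hitRegimeEvent {ι : Type*} (ℓ : ℤ) (β : ι) : Set (ℕ → ι × ℤ) :=
  {ω | ∃ n : ℕ, 1 ≤ n ∧ (ω n).2 = ℓ ∧ (ω n).1 = β ∧ ∀ k, 1 ≤ k → k < n → (ω k).2 ≠ ℓ}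

/-- The event `{X_n ≤ ℓ infinitely often}`. -/
def belowIO {ι : Type*} (ℓ : ℤ) : Set (ℕ → ι × ℤ) := {ω | ∃ᶠ n in atTop, (ω n).2 ≤ ℓ}

/-- The event `{lim_n X_n = +∞}`. -/
def driftTop {ι : Type*} : Set (ℕ → ι × ℤ) := {ω | Tendsto (fun n => (ω n).2) atTop atTop}

/-- The event `{lim_n X_n = -∞}`. -/
def driftBot {ι : Type*} : Set (ℕ → ι × ℤ) := {ω | Tendsto (fun n => (ω n).2) atTop atBot}

/-- The event `{liminf_n X_n = -∞ and limsup_n X_n = +∞}`. -/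
def oscillate {ι : Type*} : Set (ℕ → ι × ℤ) :=
  {ω | (∀ M : ℤ, ∃ᶠ n in atTop, (ω n).2 < M) ∧ ∀ M : ℤ, ∃ᶠ n in atTop, M < (ω n).2}

/-- `‖f_{iℓ}‖ = max_α P_{αi}(τ_ℓ < ∞)`. -/
noncomputable def fnorm {ι : Type*} [Fintype ι] [MeasurableSpace ι]
    (μ : ι → ℤ → Measure (ℕ → ι × ℤ)) (i ℓ : ℤ) : ℝ :=
  ⨆ α : ι, (μ α i (hitEvent ℓ)).toReal

/-- One step of the chain `(G_n, X_n)` has positive probability (the probabilities `p` being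
in `(0,1)`, this only depends on `Q`). -/
def StepPos {ι : Type*} (Q : Matrix ι ι ℝ) (s s' : ι × ℤ) : Prop :=
  0 < Q s.1 s'.1 ∧ (s'.2 = s.2 + 1 ∨ s'.2 = s.2 - 1)

/-- Irreducibility of the Markov chain `(G_n, X_n)`. -/
def ChainIrreducible {ι : Type*} (Q : Matrix ι ι ℝ) : Prop :=
  ∀ s s' : ι × ℤ, ∃ (n : ℕ) (c : ℕ → ι × ℤ),
    c 0 = s ∧ c n = s' ∧ ∀ k < n, StepPos Q (c k) (c (k + 1))

/-- Irreducibility of the Markov chain `G_n` with transition matrix `Q`. -/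
def MatIrreducible {ι : Type*} (Q : Matrix ι ι ℝ) : Prop :=
  ∀ α β : ι, ∃ (n : ℕ) (g : ℕ → ι), g 0 = α ∧ g n = β ∧ ∀ k < n, 0 < Q (g k) (g (k + 1))

/-- One-step transition probability of a nearest-neighbour random walk on `ℤ`. -/
noncomputable def stepRW (p : ℤ → ℝ) (i j : ℤ) : ℝ :=
  if j = i + 1 then p i else if j = i - 1 then 1 - p i else 0

/-- `μ i` is the quenched law of the nearest-neighbour walk on `ℤ` started at `i`. -/
def IsRWLaw (p : ℤ → ℝ) (μ : ℤ → Measure (ℕ → ℤ)) : Prop :=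
  ∀ i : ℤ,
    IsProbabilityMeasure (μ i) ∧
    ∀ (n : ℕ) (traj : ℕ → ℤ),
      μ i {ω | ∀ k ≤ n, ω k = traj k} =
        (if traj 0 = i then 1 else 0) *
          ENNReal.ofReal (∏ k ∈ Finset.range n, stepRW p (traj k) (traj (k + 1)))

def driftTopZ : Set (ℕ → ℤ) := {ω | Tendsto ω atTop atTop}

def driftBotZ : Set (ℕ → ℤ) := {ω | Tendsto ω atTop atBot}

def oscillateZ : Set (ℕ → ℤ) :=
  {ω | (∀ M : ℤ, ∃ᶠ n in atTop, ω n < M) ∧ ∀ M : ℤ, ∃ᶠ n in atTop, M < ω n}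

/-- A norm on matrices (all norms being equivalent, the choice is irrelevant). -/
noncomputable def matNorm {ι : Type*} [Fintype ι] (B : Matrix ι ι ℝ) : ℝ :=
  ⨆ x : ι × ι, |B x.1 x.2|

/-- `prodA A n = A_n ⋯ A_1`. -/
def prodA {ι : Type*} [Fintype ι] [DecidableEq ι]
    (A : ℤ → Matrix ι ι ℝ) : ℕ → Matrix ι ι ℝ
  | 0 => 1
  | n + 1 => A ((n : ℤ) + 1) * prodA A n

/-- The Lyapunov exponent `lim_n n⁻¹ log ‖B_n v‖` (as a `limsup`, in `EReal`). -/
noncomputable def lyap {ι : Type*} [Fintype ι] (B : ℕ → Matrix ι ι ℝ) (v : ι → ℝ) : EReal :=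
  Filter.limsup (fun n : ℕ => ((Real.log ‖B n *ᵥ v‖ / n : ℝ) : EReal)) Filter.atTop

/-- `V̄_0 = {v : lim_n n⁻¹ log ‖B_n v‖ ≤ 0}`. -/
def V0 {ι : Type*} [Fintype ι] (B : ℕ → Matrix ι ι ℝ) : Set (ι → ℝ) := {v | lyap B v ≤ 0}

/-- `V̄_{0-} = {v : lim_n n⁻¹ log ‖B_n v‖ < 0}`. -/
def V0minus {ι : Type*} [Fintype ι] (B : ℕ → Matrix ι ι ℝ) : Set (ι → ℝ) := {v | lyap B v < 0}

/-- `S` is a linear subspace of dimension `d`. -/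
def HasDim {ι : Type*} [Fintype ι] (S : Set (ι → ℝ)) (d : ℕ) : Prop :=
  ∃ W : Submodule ℝ (ι → ℝ), (W : Set (ι → ℝ)) = S ∧ Module.finrank ℝ W = d

/-- The `2m × 2m` matrix `A_i = [[M_i⁻¹, -σ_i],[I, 0]]` with `M_i = QΔ_i`, `N_i = Q(I - Δ_i)`,
`σ_i = M_i⁻¹ N_i`, where `p` lists the diagonal entries of `Δ_i`. -/
noncomputable def Afull {m : ℕ} (Q : Matrix (Fin m) (Fin m) ℝ) (p : Fin m → ℝ) :
    Matrix (Fin m ⊕ Fin m) (Fin m ⊕ Fin m) ℝ :=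
  Matrix.fromBlocks (Q * Matrix.diagonal p)⁻¹
    (-((Q * Matrix.diagonal p)⁻¹ * (Q * (1 - Matrix.diagonal p)))) 1 0

/-- `M̌_i = π⁽¹⁾Δ_i⁽¹⁾ + π⁽²⁾Δ_i⁽²⁾Θ`. -/
noncomputable def Mcheck {r s : ℕ} (π : Matrix (Fin r) (Fin r ⊕ Fin s) ℝ)
    (Θ : Matrix (Fin s) (Fin r) ℝ) (p : Fin r ⊕ Fin s → ℝ) : Matrix (Fin r) (Fin r) ℝ :=
  (Matrix.of fun a c => π a (Sum.inl c)) * Matrix.diagonal (fun c => p (Sum.inl c)) +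
    (Matrix.of fun a b => π a (Sum.inr b)) * Matrix.diagonal (fun b => p (Sum.inr b)) * Θ

/-- `Ň_i = π⁽¹⁾(I - Δ_i⁽¹⁾) + π⁽²⁾(I - Δ_i⁽²⁾)Θ`. -/
noncomputable def Ncheck {r s : ℕ} (π : Matrix (Fin r) (Fin r ⊕ Fin s) ℝ)
    (Θ : Matrix (Fin s) (Fin r) ℝ) (p : Fin r ⊕ Fin s → ℝ) : Matrix (Fin r) (Fin r) ℝ :=
  (Matrix.of fun a c => π a (Sum.inl c)) * (1 - Matrix.diagonal (fun c => p (Sum.inl c))) +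
    (Matrix.of fun a b => π a (Sum.inr b)) * (1 - Matrix.diagonal (fun b => p (Sum.inr b))) * Θ

/-- The `2r × 2r` matrix `Ǎ_i = [[M̌_i⁻¹, -σ̌_i],[I, 0]]` with `σ̌_i = M̌_i⁻¹ Ň_i`. -/
noncomputable def Acheck {r s : ℕ} (π : Matrix (Fin r) (Fin r ⊕ Fin s) ℝ)
    (Θ : Matrix (Fin s) (Fin r) ℝ) (p : Fin r ⊕ Fin s → ℝ) :
    Matrix (Fin r ⊕ Fin r) (Fin r ⊕ Fin r) ℝ :=
  Matrix.fromBlocks (Mcheck π Θ p)⁻¹ (-((Mcheck π Θ p)⁻¹ * Ncheck π Θ p)) 1 0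

/-- The event `{𝒩_ℓ ≥ k} = {τ_ℓ^{(k)} < ∞}`: there are at least `k` visits of `X` to `ℓ`
(at times `≥ 1`). -/
def visitsAtLeast {ι : Type*} (ℓ : ℤ) (k : ℕ) : Set (ℕ → ι × ℤ) :=
  {ω | ∃ s : Fin k → ℕ, StrictMono s ∧ ∀ j, 1 ≤ s j ∧ (ω (s j)).2 = ℓ}

/-- The event `{τ_ℓ^{(k+1)} < ∞, G_{τ_ℓ^{(k+1)}} = β}`: the walk visits `ℓ` at least `k+1` times
and the regime at the `(k+1)`-th visit is `β`. -/
def kthVisitInRegime {ι : Type*} (ℓ : ℤ) (k : ℕ) (β : ι) : Set (ℕ → ι × ℤ) :=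
  {ω | ∃ s : Fin (k + 1) → ℕ, StrictMono s ∧ (∀ j, 1 ≤ s j ∧ (ω (s j)).2 = ℓ) ∧
    (ω (s (Fin.last k))).1 = β ∧
    ∀ n : ℕ, 1 ≤ n → n ≤ s (Fin.last k) → (ω n).2 = ℓ → ∃ j, s j = n}

/-- The shift on real sequences. -/
def shiftSeq : (ℕ → ℝ) → (ℕ → ℝ) := fun x n => x (n + 1)


/-! ### Statement 4: Proposition `prop:time3` -/

section Helpers

variable {q p a b a' b' : ℝ}

lemma term_nonneg (hq : 0 ≤ q) (hp0 : 0 ≤ p) (hp1 : p ≤ 1) (ha : 0 ≤ a) (hb : 0 ≤ b) :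
    0 ≤ q * (p * a + (1 - p) * b) :=
  mul_nonneg hq (add_nonneg (mul_nonneg hp0 ha) (mul_nonneg (by linarith) hb))

lemma term_mono (hq : 0 ≤ q) (hp0 : 0 ≤ p) (hp1 : p ≤ 1) (ha : a ≤ a') (hb : b ≤ b') :
    q * (p * a + (1 - p) * b) ≤ q * (p * a' + (1 - p) * b') :=
  mul_le_mul_of_nonneg_left
    (add_le_add (mul_le_mul_of_nonneg_left ha hp0) (mul_le_mul_of_nonneg_left hb (by linarith))) hq

lemma term_le (hq : 0 ≤ q) (hp0 : 0 ≤ p) (hp1 : p ≤ 1) (ha : a ≤ 1) (hb : b ≤ 1) :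
    q * (p * a + (1 - p) * b) ≤ q := by
  have := term_mono hq hp0 hp1 ha hb
  calc q * (p * a + (1 - p) * b) ≤ q * (p * 1 + (1 - p) * 1) := this
    _ = q := by ring

end Helpers

variable {m : ℕ}

noncomputable def uN (Q : Matrix (Fin m) (Fin m) ℝ) (f : Fin m → ℤ → ℝ) (ℓ : ℤ) :
    ℕ → Fin m → ℤ → ℝ
  | 0 => fun _ _ => 0
  | N+1 => fun α i => ∑ β, Q α β * (f β i * (if i+1 = ℓ then 1 else uN Q f ℓ N β (i+1))
      + (1 - f β i) * (if i-1 = ℓ then 1 else uN Q f ℓ N β (i-1)))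

/-- Quenched hitting probability as sup of the finite-horizon recursion. -/
noncomputable def hh (Q : Matrix (Fin m) (Fin m) ℝ) (f : Fin m → ℤ → ℝ) (ℓ : ℤ)
    (α : Fin m) (i : ℤ) : ℝ := ⨆ N, uN Q f ℓ N α i

section Analysis

variable {Q : Matrix (Fin m) (Fin m) ℝ} {f : Fin m → ℤ → ℝ} {ℓ : ℤ}

lemma uN_nonneg (hQ0 : ∀ a b, 0 ≤ Q a b) (hf : ∀ a k, f a k ∈ Set.Ioo (0:ℝ) 1) :
    ∀ N α i, 0 ≤ uN Q f ℓ N α i := by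
  intro N
  induction N with
  | zero => intro α i; simp [uN]
  | succ N ih =>
    intro α i
    apply Finset.sum_nonneg
    intro β _
    refine term_nonneg (hQ0 α β) (hf β i).1.le (hf β i).2.le ?_ ?_
    · split
      · norm_num
      · exact ih β (i+1)
    · split
      · norm_num
      · exact ih β (i-1)

lemma uN_le_one (hQ0 : ∀ a b, 0 ≤ Q a b) (hQ1 : ∀ a, ∑ b, Q a b = 1)
    (hf : ∀ a k, f a k ∈ Set.Ioo (0:ℝ) 1) :
    ∀ N α i, uN Q f ℓ N α i ≤ 1 := by
  intro N
  induction N with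
  | zero => intro α i; simp [uN]
  | succ N ih =>
    intro α i
    have key : uN Q f ℓ (N+1) α i ≤ ∑ β, Q α β := by
      apply Finset.sum_le_sum
      intro β _
      refine term_le (hQ0 α β) (hf β i).1.le (hf β i).2.le ?_ ?_
      · split
        · exact le_rfl
        · exact ih β (i+1)
      · split
        · exact le_rfl
        · exact ih β (i-1)
    calc uN Q f ℓ (N+1) α i ≤ ∑ β, Q α β := key
      _ = 1 := hQ1 α

lemma uN_mono (hQ0 : ∀ a b, 0 ≤ Q a b) (hf : ∀ a k, f a k ∈ Set.Ioo (0:ℝ) 1) :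
    ∀ N α i, uN Q f ℓ N α i ≤ uN Q f ℓ (N+1) α i := by
  intro N
  induction N with
  | zero => intro α i; simpa [uN] using uN_nonneg hQ0 hf 1 α i
  | succ N ih =>
    intro α i
    apply Finset.sum_le_sum
    intro β _
    refine term_mono (hQ0 α β) (hf β i).1.le (hf β i).2.le ?_ ?_
    · split
      · exact le_rfl
      · exact ih β (i+1)
    · split
      · exact le_rfl
      · exact ih β (i-1)

lemma uN_monotone (hQ0 : ∀ a b, 0 ≤ Q a b) (hf : ∀ a k, f a k ∈ Set.Ioo (0:ℝ) 1)
    (α : Fin m) (i : ℤ) : Monotone fun N => uN Q f ℓ N α i :=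
  monotone_nat_of_le_succ fun N => uN_mono hQ0 hf N α i

lemma hh_nonneg (hQ0 : ∀ a b, 0 ≤ Q a b) (hf : ∀ a k, f a k ∈ Set.Ioo (0:ℝ) 1)
    (α : Fin m) (i : ℤ) : 0 ≤ hh Q f ℓ α i :=
  Real.iSup_nonneg fun N => uN_nonneg hQ0 hf N α i

lemma hh_bdd (hQ0 : ∀ a b, 0 ≤ Q a b) (hQ1 : ∀ a, ∑ b, Q a b = 1)
    (hf : ∀ a k, f a k ∈ Set.Ioo (0:ℝ) 1) (α : Fin m) (i : ℤ) :
    BddAbove (Set.range fun N => uN Q f ℓ N α i) :=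
  ⟨1, by rintro x ⟨N, rfl⟩; exact uN_le_one hQ0 hQ1 hf N α i⟩

lemma hh_le_one (hQ0 : ∀ a b, 0 ≤ Q a b) (hQ1 : ∀ a, ∑ b, Q a b = 1)
    (hf : ∀ a k, f a k ∈ Set.Ioo (0:ℝ) 1) (α : Fin m) (i : ℤ) : hh Q f ℓ α i ≤ 1 :=
  ciSup_le fun N => uN_le_one hQ0 hQ1 hf N α i

lemma uN_le_hh (hQ0 : ∀ a b, 0 ≤ Q a b) (hQ1 : ∀ a, ∑ b, Q a b = 1)
    (hf : ∀ a k, f a k ∈ Set.Ioo (0:ℝ) 1) (N : ℕ) (α : Fin m) (i : ℤ) :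
    uN Q f ℓ N α i ≤ hh Q f ℓ α i :=
  le_ciSup (hh_bdd hQ0 hQ1 hf α i) N

lemma tendsto_uN (hQ0 : ∀ a b, 0 ≤ Q a b) (hQ1 : ∀ a, ∑ b, Q a b = 1)
    (hf : ∀ a k, f a k ∈ Set.Ioo (0:ℝ) 1) (α : Fin m) (i : ℤ) :
    Filter.Tendsto (fun N => uN Q f ℓ N α i) Filter.atTop (nhds (hh Q f ℓ α i)) :=
  tendsto_atTop_ciSup (uN_monotone hQ0 hf α i) (hh_bdd hQ0 hQ1 hf α i)



noncomputable def hE (Q : Matrix (Fin m) (Fin m) ℝ) (f : Fin m → ℤ → ℝ) (ℓ : ℤ)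
    (β : Fin m) (j : ℤ) : ℝ := if j = ℓ then 1 else hh Q f ℓ β j

lemma hE_nonneg (hQ0 : ∀ a b, 0 ≤ Q a b) (hf : ∀ a k, f a k ∈ Set.Ioo (0:ℝ) 1)
    (β : Fin m) (j : ℤ) : 0 ≤ hE Q f ℓ β j := by
  unfold hE; split
  · norm_num
  · exact hh_nonneg hQ0 hf β j

lemma hE_le_one (hQ0 : ∀ a b, 0 ≤ Q a b) (hQ1 : ∀ a, ∑ b, Q a b = 1)
    (hf : ∀ a k, f a k ∈ Set.Ioo (0:ℝ) 1) (β : Fin m) (j : ℤ) : hE Q f ℓ β j ≤ 1 := by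
  unfold hE; split
  · exact le_rfl
  · exact hh_le_one hQ0 hQ1 hf β j

/-- The one-step (harmonic) identity for the hitting probability. -/
lemma hh_step (hQ0 : ∀ a b, 0 ≤ Q a b) (hQ1 : ∀ a, ∑ b, Q a b = 1)
    (hf : ∀ a k, f a k ∈ Set.Ioo (0:ℝ) 1) (α : Fin m) (i : ℤ) :
    hh Q f ℓ α i =
      ∑ β, Q α β * (f β i * hE Q f ℓ β (i+1) + (1 - f β i) * hE Q f ℓ β (i-1)) := by
  have t1 : Filter.Tendsto (fun N => uN Q f ℓ (N+1) α i) Filter.atTop (nhds (hh Q f ℓ α i)) :=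
    (tendsto_uN hQ0 hQ1 hf α i).comp (Filter.tendsto_add_atTop_nat 1)
  have t2 : Filter.Tendsto (fun N => uN Q f ℓ (N+1) α i) Filter.atTop
      (nhds (∑ β, Q α β * (f β i * hE Q f ℓ β (i+1) + (1 - f β i) * hE Q f ℓ β (i-1)))) := by
    show Filter.Tendsto (fun N => ∑ β, Q α β * (f β i * (if i+1 = ℓ then 1 else uN Q f ℓ N β (i+1))
      + (1 - f β i) * (if i-1 = ℓ then 1 else uN Q f ℓ N β (i-1)))) Filter.atTop _
    apply tendsto_finset_sum
    intro β _
    apply Filter.Tendsto.const_mul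
    apply Filter.Tendsto.add
    · apply Filter.Tendsto.const_mul
      unfold hE
      by_cases h : i + 1 = ℓ
      · simp only [h, if_pos rfl]; simp
      · simp only [if_neg h]; exact tendsto_uN hQ0 hQ1 hf β (i+1)
    · apply Filter.Tendsto.const_mul
      unfold hE
      by_cases h : i - 1 = ℓ
      · simp only [h, if_pos rfl]; simp
      · simp only [if_neg h]; exact tendsto_uN hQ0 hQ1 hf β (i-1)
  exact tendsto_nhds_unique t1 t2

/-- If the hitting probability is 1, it is 1 from both neighbours through any admissible
regime change. -/
lemma hh_harmonic_of_one (hQ0 : ∀ a b, 0 ≤ Q a b) (hQ1 : ∀ a, ∑ b, Q a b = 1)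
    (hf : ∀ a k, f a k ∈ Set.Ioo (0:ℝ) 1) {α : Fin m} {i : ℤ}
    (h1 : hh Q f ℓ α i = 1) {β : Fin m} (hβ : 0 < Q α β) :
    hE Q f ℓ β (i+1) = 1 ∧ hE Q f ℓ β (i-1) = 1 := by
  set g : Fin m → ℝ := fun β => f β i * hE Q f ℓ β (i+1) + (1 - f β i) * hE Q f ℓ β (i-1)
    with hg
  have hgle : ∀ β, g β ≤ 1 := by
    intro β
    have := term_le (zero_le_one (α := ℝ)) (hf β i).1.le (hf β i).2.le
      (hE_le_one (ℓ := ℓ) hQ0 hQ1 hf β (i+1)) (hE_le_one (ℓ := ℓ) hQ0 hQ1 hf β (i-1))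
    simpa [hg] using this
  have hsum : ∑ b, Q α b * (1 - g b) = 0 := by
    have h2 : ∑ b, Q α b * g b = 1 := by rw [← hh_step hQ0 hQ1 hf α i]; exact h1
    have := hQ1 α
    simp only [mul_sub, Finset.sum_sub_distrib, mul_one]
    rw [this, h2]; ring
  have hzero : ∀ b ∈ Finset.univ, Q α b * (1 - g b) = 0 :=
    (Finset.sum_eq_zero_iff_of_nonneg
      (fun b _ => mul_nonneg (hQ0 α b) (by linarith [hgle b]))).1 hsum
  have hgβ : g β = 1 := by
    have := hzero β (Finset.mem_univ β)
    rcases mul_eq_zero.1 this with h | h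
    · exact absurd h (ne_of_gt hβ)
    · linarith
  have hp := hf β i
  have hA := hE_le_one hQ0 hQ1 hf (ℓ := ℓ) β (i+1)
  have hB := hE_le_one hQ0 hQ1 hf (ℓ := ℓ) β (i-1)
  simp only [hg] at hgβ
  set A := hE Q f ℓ β (i+1)
  set B := hE Q f ℓ β (i-1)
  have hup : 1 ≤ A := by
    have h5 : (1 - f β i) * B ≤ (1 - f β i) * 1 :=
      mul_le_mul_of_nonneg_left hB (by linarith [hp.2])
    have h6 : f β i * 1 ≤ f β i * A := by nlinarith
    exact le_of_mul_le_mul_left h6 hp.1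
  have hdn : 1 ≤ B := by
    have h5 : f β i * A ≤ f β i * 1 := mul_le_mul_of_nonneg_left hA hp.1.le
    have h6 : (1 - f β i) * 1 ≤ (1 - f β i) * B := by nlinarith
    exact le_of_mul_le_mul_left h6 (by linarith [hp.2])
  exact ⟨le_antisymm hA hup, le_antisymm hB hdn⟩

/-- Crossing: to reach a level `ℓ' ≥ ℓ` from below `ℓ`, the walk must cross `ℓ`. -/
lemma uN_cross (hQ0 : ∀ a b, 0 ≤ Q a b) (hQ1 : ∀ a, ∑ b, Q a b = 1)
    (hf : ∀ a k, f a k ∈ Set.Ioo (0:ℝ) 1) {ℓ' : ℤ} (hℓ : ℓ ≤ ℓ') :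
    ∀ N α j, j < ℓ → uN Q f ℓ' N α j ≤ uN Q f ℓ N α j := by
  intro N
  induction N with
  | zero => intro α j _; simp [uN]
  | succ N ih =>
    intro α j hj
    apply Finset.sum_le_sum
    intro β _
    refine term_mono (hQ0 α β) (hf β j).1.le (hf β j).2.le ?_ ?_
    · by_cases h : j + 1 = ℓ
      · rw [if_pos h]
        split
        · exact le_rfl
        · exact uN_le_one hQ0 hQ1 hf N β (j+1)
      · have hne : j + 1 ≠ ℓ' := by omega
        rw [if_neg h, if_neg hne]
        exact ih β (j+1) (by omega)
    · have h1 : j - 1 ≠ ℓ := by omega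
      have h2 : j - 1 ≠ ℓ' := by omega
      rw [if_neg h1, if_neg h2]
      exact ih β (j-1) (by omega)

lemma hh_cross (hQ0 : ∀ a b, 0 ≤ Q a b) (hQ1 : ∀ a, ∑ b, Q a b = 1)
    (hf : ∀ a k, f a k ∈ Set.Ioo (0:ℝ) 1) {ℓ' : ℤ} (hℓ : ℓ ≤ ℓ') {α : Fin m} {j : ℤ}
    (hj : j < ℓ) : hh Q f ℓ' α j ≤ hh Q f ℓ α j :=
  ciSup_le fun N => le_trans (uN_cross hQ0 hQ1 hf hℓ N α j hj) (uN_le_hh hQ0 hQ1 hf N α j)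

/-- Reflection of the environment. -/
def frefl (f : Fin m → ℤ → ℝ) : Fin m → ℤ → ℝ := fun a k => 1 - f a (-k)

lemma frefl_mem (hf : ∀ a k, f a k ∈ Set.Ioo (0:ℝ) 1) :
    ∀ a k, frefl f a k ∈ Set.Ioo (0:ℝ) 1 := by
  intro a k
  have := hf a (-k)
  exact ⟨by simp [frefl]; linarith [this.2], by simp [frefl]; linarith [this.1]⟩

lemma uN_refl : ∀ N (α : Fin m) (i : ℤ), uN Q (frefl f) (-ℓ) N α i = uN Q f ℓ N α (-i) := by
  intro N
  induction N with
  | zero => intro α i; simp [uN]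
  | succ N ih =>
    intro α i
    show ∑ β, _ = ∑ β, _
    apply Finset.sum_congr rfl
    intro β _
    have e1 : (i + 1 = -ℓ) ↔ (-i - 1 = ℓ) := by omega
    have e2 : (i - 1 = -ℓ) ↔ (-i + 1 = ℓ) := by omega
    have v1 : uN Q (frefl f) (-ℓ) N β (i+1) = uN Q f ℓ N β (-i - 1) := by
      rw [ih β (i+1)]; congr 1; ring
    have v2 : uN Q (frefl f) (-ℓ) N β (i-1) = uN Q f ℓ N β (-i + 1) := by
      rw [ih β (i-1)]; congr 1; ring
    simp only [e1, e2, v1, v2, frefl]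
    ring

lemma hh_refl (α : Fin m) (i : ℤ) : hh Q (frefl f) (-ℓ) α i = hh Q f ℓ α (-i) := by
  unfold hh
  congr 1
  ext N
  exact uN_refl N α i

/-- Shift of the environment. -/
def fshift (f : Fin m → ℤ → ℝ) : Fin m → ℤ → ℝ := fun a k => f a (k+1)

lemma fshift_mem (hf : ∀ a k, f a k ∈ Set.Ioo (0:ℝ) 1) :
    ∀ a k, fshift f a k ∈ Set.Ioo (0:ℝ) 1 := fun a k => hf a (k+1)

lemma uN_shift : ∀ N (α : Fin m) (i : ℤ), uN Q (fshift f) ℓ N α i = uN Q f (ℓ+1) N α (i+1) := by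
  intro N
  induction N with
  | zero => intro α i; simp [uN]
  | succ N ih =>
    intro α i
    show ∑ β, _ = ∑ β, _
    apply Finset.sum_congr rfl
    intro β _
    have e1 : (i + 1 = ℓ) ↔ (i + 1 + 1 = ℓ + 1) := by omega
    have e2 : (i - 1 = ℓ) ↔ (i + 1 - 1 = ℓ + 1) := by omega
    have v1 : uN Q (fshift f) ℓ N β (i+1) = uN Q f (ℓ+1) N β (i + 1 + 1) := ih β (i+1)
    have v2 : uN Q (fshift f) ℓ N β (i-1) = uN Q f (ℓ+1) N β (i + 1 - 1) := by
      rw [ih β (i-1)]; congr 1; ring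
    simp only [e1, e2, v1, v2, fshift]

lemma hh_shift (α : Fin m) (i : ℤ) : hh Q (fshift f) ℓ α i = hh Q f (ℓ+1) α (i+1) := by
  unfold hh
  congr 1
  ext N
  exact uN_shift N α i


lemma exists_pos_entry (hQ0 : ∀ a b, 0 ≤ Q a b) (hQ1 : ∀ a, ∑ b, Q a b = 1) (α : Fin m) :
    ∃ β, 0 < Q α β := by
  by_contra h
  push_neg at h
  have h0 : ∀ b ∈ Finset.univ, Q α b = 0 := fun b _ => le_antisymm (h b) (hQ0 α b)
  have := hQ1 α
  rw [Finset.sum_eq_zero h0] at this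
  norm_num at this

/-- From `i < j < ℓ`, reaching `ℓ` forces passing through `j`. -/
lemma hh_le_sup_right (hm : 0 < m) (hQ0 : ∀ a b, 0 ≤ Q a b) (hQ1 : ∀ a, ∑ b, Q a b = 1)
    (hf : ∀ a k, f a k ∈ Set.Ioo (0:ℝ) 1) {j : ℤ} (hjℓ : j < ℓ) :
    ∀ (α : Fin m) (i : ℤ), i < j → hh Q f ℓ α i ≤ ⨆ γ, hh Q f ℓ γ j := by
  haveI : Nonempty (Fin m) := ⟨⟨0, hm⟩⟩
  set M := ⨆ γ, hh Q f ℓ γ j with hM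
  have hMle : ∀ γ, hh Q f ℓ γ j ≤ M := fun γ => by
    rw [hM]; exact le_ciSup (f := fun γ => hh Q f ℓ γ j) (Finite.bddAbove_range _) γ
  have hM0 : 0 ≤ M := le_trans (hh_nonneg hQ0 hf (Classical.arbitrary _) j)
    (hMle (Classical.arbitrary _))
  have key : ∀ N (α : Fin m) (i : ℤ), i < j → uN Q f ℓ N α i ≤ M := by
    intro N
    induction N with
    | zero => intro α i _; simpa [uN] using hM0
    | succ N ih =>
      intro α i hij
      have hterm : ∀ β ∈ Finset.univ, Q α β *
          (f β i * (if i+1 = ℓ then 1 else uN Q f ℓ N β (i+1))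
            + (1 - f β i) * (if i-1 = ℓ then 1 else uN Q f ℓ N β (i-1))) ≤ Q α β * M := by
        intro β _
        have hA : (if i+1 = ℓ then 1 else uN Q f ℓ N β (i+1)) ≤ M := by
          rw [if_neg (by omega : ¬ i + 1 = ℓ)]
          rcases lt_or_eq_of_le (by omega : i + 1 ≤ j) with h | h
          · exact ih β (i+1) h
          · rw [h]; exact le_trans (uN_le_hh hQ0 hQ1 hf N β j) (hMle β)
        have hB : (if i-1 = ℓ then 1 else uN Q f ℓ N β (i-1)) ≤ M := by
          rw [if_neg (by omega : ¬ i - 1 = ℓ)]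
          exact ih β (i-1) (by omega)
        calc Q α β * (f β i * _ + (1 - f β i) * _)
            ≤ Q α β * (f β i * M + (1 - f β i) * M) :=
              term_mono (hQ0 α β) (hf β i).1.le (hf β i).2.le hA hB
          _ = Q α β * M := by ring
      calc uN Q f ℓ (N+1) α i ≤ ∑ β, Q α β * M := Finset.sum_le_sum hterm
        _ = M := by rw [← Finset.sum_mul, hQ1 α, one_mul]
  intro α i hij
  exact ciSup_le fun N => key N α i hij

/-- Straight-descent weight from level `i + d` down to level `i`. -/
noncomputable def wdn (Q : Matrix (Fin m) (Fin m) ℝ) (f : Fin m → ℤ → ℝ) (i : ℤ) :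
    ℕ → Fin m → ℝ
  | 0 => fun _ => 1
  | d+1 => fun α => ∑ β, Q α β * (1 - f β (i + d + 1)) * wdn Q f i d β

lemma wdn_pos (hQ0 : ∀ a b, 0 ≤ Q a b) (hQ1 : ∀ a, ∑ b, Q a b = 1)
    (hf : ∀ a k, f a k ∈ Set.Ioo (0:ℝ) 1) (i : ℤ) :
    ∀ d α, 0 < wdn Q f i d α := by
  intro d
  induction d with
  | zero => intro α; simp [wdn]
  | succ d ih =>
    intro α
    obtain ⟨β₀, hβ₀⟩ := exists_pos_entry hQ0 hQ1 α
    apply Finset.sum_pos'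
    · intro β _
      exact mul_nonneg (mul_nonneg (hQ0 α β) (by linarith [(hf β (i + d + 1)).2])) (ih β).le
    · exact ⟨β₀, Finset.mem_univ β₀,
        mul_pos (mul_pos hβ₀ (by linarith [(hf β₀ (i + d + 1)).2])) (ih β₀)⟩

lemma wdn_le_one (hQ0 : ∀ a b, 0 ≤ Q a b) (hQ1 : ∀ a, ∑ b, Q a b = 1)
    (hf : ∀ a k, f a k ∈ Set.Ioo (0:ℝ) 1) (i : ℤ) :
    ∀ d α, wdn Q f i d α ≤ 1 := by
  intro d
  induction d with
  | zero => intro α; simp [wdn]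
  | succ d ih =>
    intro α
    have : ∀ β ∈ Finset.univ, Q α β * (1 - f β (i + d + 1)) * wdn Q f i d β ≤ Q α β := by
      intro β _
      have h1 := (hf β (i + d + 1)).1
      have h2 := (hf β (i + d + 1)).2
      have h3 := wdn_pos hQ0 hQ1 hf i d β
      have h4 := ih β
      have h5 : (1 - f β (i + d + 1)) * wdn Q f i d β ≤ 1 := by nlinarith
      calc Q α β * (1 - f β (i + d + 1)) * wdn Q f i d β
          = Q α β * ((1 - f β (i + d + 1)) * wdn Q f i d β) := by ring
        _ ≤ Q α β * 1 := mul_le_mul_of_nonneg_left h5 (hQ0 α β)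
        _ = Q α β := mul_one _
    calc wdn Q f i (d+1) α ≤ ∑ β, Q α β := Finset.sum_le_sum this
      _ = 1 := hQ1 α

/-- If the walk reaches `ℓ` a.s. from some `j ∈ (i, ℓ)`, then the best hitting probability
from `i` is 1. -/
lemma sup_one_of_one_above (hm : 0 < m) (hQ0 : ∀ a b, 0 ≤ Q a b)
    (hQ1 : ∀ a, ∑ b, Q a b = 1) (hf : ∀ a k, f a k ∈ Set.Ioo (0:ℝ) 1)
    {i j : ℤ} (hij : i < j) (hjℓ : j < ℓ) {β : Fin m} (h1 : hh Q f ℓ β j = 1) :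
    (⨆ γ, hh Q f ℓ γ i) = 1 := by
  haveI : Nonempty (Fin m) := ⟨⟨0, hm⟩⟩
  set M := ⨆ γ, hh Q f ℓ γ i with hM
  have hMle : ∀ γ, hh Q f ℓ γ i ≤ M := fun γ => by
    rw [hM]; exact le_ciSup (f := fun γ => hh Q f ℓ γ i) (Finite.bddAbove_range _) γ
  have hM0 : 0 ≤ M := le_trans (hh_nonneg hQ0 hf (Classical.arbitrary _) i)
    (hMle (Classical.arbitrary _))
  have hM1 : M ≤ 1 := ciSup_le fun γ => hh_le_one hQ0 hQ1 hf γ i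
  have key : ∀ N (α : Fin m) (d : ℕ), i + d < ℓ →
      uN Q f ℓ N α (i + d) ≤ 1 - wdn Q f i d α * (1 - M) := by
    intro N
    induction N with
    | zero =>
      intro α d _
      have h1' := wdn_pos hQ0 hQ1 hf i d α
      have h2' := wdn_le_one hQ0 hQ1 hf i d α
      have : wdn Q f i d α * (1 - M) ≤ 1 := by nlinarith
      simpa [uN] using by linarith
    | succ N ih =>
      intro α d hd
      match d with
      | 0 =>
        have : uN Q f ℓ (N+1) α (i + 0) ≤ M := by
          simpa using le_trans (uN_le_hh hQ0 hQ1 hf (N+1) α i) (hMle α)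
        simpa [wdn] using this
      | Nat.succ d' =>
        have hx : i + ((d' : ℤ) + 1) - 1 = i + d' := by ring
        have hd' : i + (d' : ℤ) < ℓ := by push_cast at hd ⊢; omega
        have hterm : ∀ β ∈ Finset.univ, Q α β *
            (f β (i + ((d' : ℤ)+1)) *
              (if i + ((d' : ℤ)+1) + 1 = ℓ then 1 else uN Q f ℓ N β (i + ((d' : ℤ)+1) + 1))
              + (1 - f β (i + ((d' : ℤ)+1))) *
              (if i + ((d' : ℤ)+1) - 1 = ℓ then 1 else uN Q f ℓ N β (i + ((d' : ℤ)+1) - 1)))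
            ≤ Q α β * (f β (i + ((d' : ℤ)+1)) * 1
              + (1 - f β (i + ((d' : ℤ)+1))) * (1 - wdn Q f i d' β * (1 - M))) := by
          intro β _
          refine term_mono (hQ0 α β) (hf β _).1.le (hf β _).2.le ?_ ?_
          · split
            · exact le_rfl
            · exact uN_le_one hQ0 hQ1 hf N β _
          · rw [if_neg (by omega : ¬ i + ((d' : ℤ)+1) - 1 = ℓ), hx]
            exact ih β d' hd'
        have hstep : uN Q f ℓ (N+1) α (i + ((d' : ℤ)+1)) ≤
            ∑ β, Q α β * (f β (i + ((d' : ℤ)+1)) * 1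
              + (1 - f β (i + ((d' : ℤ)+1))) * (1 - wdn Q f i d' β * (1 - M))) :=
          Finset.sum_le_sum hterm
        have hsum : ∑ β, Q α β * (f β (i + ((d' : ℤ)+1)) * 1
              + (1 - f β (i + ((d' : ℤ)+1))) * (1 - wdn Q f i d' β * (1 - M)))
            = 1 - wdn Q f i (d'+1) α * (1 - M) := by
          have expand : ∀ β, Q α β * (f β (i + ((d' : ℤ)+1)) * 1
              + (1 - f β (i + ((d' : ℤ)+1))) * (1 - wdn Q f i d' β * (1 - M)))
              = Q α β - (Q α β * (1 - f β (i + (d' : ℤ) + 1)) * wdn Q f i d' β) * (1 - M) := by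
            intro β
            have : i + ((d' : ℤ) + 1) = i + (d' : ℤ) + 1 := by ring
            rw [this]; ring
          rw [Finset.sum_congr rfl (fun β _ => expand β)]
          rw [Finset.sum_sub_distrib, hQ1 α, ← Finset.sum_mul]
          have : wdn Q f i (d'+1) α = ∑ β, Q α β * (1 - f β (i + (d' : ℤ) + 1)) * wdn Q f i d' β := by
            simp [wdn]
          rw [this]
        have goal_eq : (i : ℤ) + ((d' : ℤ) + 1) = i + ((Nat.succ d' : ℕ) : ℤ) := by push_cast; ring
        rw [← goal_eq]
        calc uN Q f ℓ (N+1) α (i + ((d' : ℤ)+1)) ≤ _ := hstep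
          _ = 1 - wdn Q f i (d'+1) α * (1 - M) := hsum
  -- conclude
  obtain ⟨d₀, hd₀⟩ : ∃ d₀ : ℕ, j = i + (d₀ : ℤ) := ⟨(j - i).toNat, by omega⟩
  have hfin : hh Q f ℓ β j ≤ 1 - wdn Q f i d₀ β * (1 - M) := by
    rw [hd₀]
    exact ciSup_le fun N => key N β d₀ (by omega)
  rw [h1] at hfin
  have hw := wdn_pos hQ0 hQ1 hf i d₀ β
  have : 1 - M ≤ 0 := by nlinarith
  linarith [hM1, this]


lemma sup_attained (hm : 0 < m) (g : Fin m → ℝ) : ∃ α, (⨆ γ, g γ) = g α := by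
  haveI : Nonempty (Fin m) := ⟨⟨0, hm⟩⟩
  haveI : Nonempty (Fin m) := ⟨⟨0, hm⟩⟩
  obtain ⟨α, hα⟩ := Finite.exists_max g
  exact ⟨α, le_antisymm (ciSup_le hα) (le_ciSup (Finite.bddAbove_range _) α)⟩

lemma part1_left (hm : 0 < m) (hQ0 : ∀ a b, 0 ≤ Q a b) (hQ1 : ∀ a, ∑ b, Q a b = 1)
    (hf : ∀ a k, f a k ∈ Set.Ioo (0:ℝ) 1)
    (hex : ∃ i, i < ℓ ∧ (⨆ α, hh Q f ℓ α i) = 1) :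
    ∀ i, i < ℓ → (⨆ α, hh Q f ℓ α i) = 1 := by
  haveI : Nonempty (Fin m) := ⟨⟨0, hm⟩⟩
  obtain ⟨i₀, hi₀, hsup⟩ := hex
  obtain ⟨α₀, hα₀⟩ := sup_attained hm (fun γ => hh Q f ℓ γ i₀)
  rw [hα₀] at hsup
  intro i hi
  rcases lt_trichotomy i i₀ with h | h | h
  · exact sup_one_of_one_above hm hQ0 hQ1 hf h hi₀ hsup
  · rw [h, hα₀, hsup]
  · refine le_antisymm (ciSup_le fun γ => hh_le_one hQ0 hQ1 hf γ i) ?_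
    calc (1:ℝ) = hh Q f ℓ α₀ i₀ := hsup.symm
      _ ≤ ⨆ γ, hh Q f ℓ γ i := hh_le_sup_right hm hQ0 hQ1 hf hi α₀ i₀ h

/-- Descent along a `Q`-positive regime path, keeping positions below `ℓ`. -/
lemma descend (hQ0 : ∀ a b, 0 ≤ Q a b) (hQ1 : ∀ a, ∑ b, Q a b = 1)
    (hf : ∀ a k, f a k ∈ Set.Ioo (0:ℝ) 1) :
    ∀ (n : ℕ) (α : Fin m) (s : ℤ), hh Q f ℓ α s = 1 → s < ℓ →
    ∀ (i : ℤ) (d u : ℕ), d + u = n → i = s - d + u → i < ℓ →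
    ∀ g : ℕ → Fin m, g 0 = α → (∀ k < n, 0 < Q (g k) (g (k+1))) →
    hh Q f ℓ (g n) i = 1 := by
  intro n
  induction n with
  | zero =>
    intro α s h1 hs i d u hdu hi _ g hg0 _
    have : i = s := by omega
    rw [hg0, this]; exact h1
  | succ n ih =>
    intro α s h1 hs i d u hdu hi hiℓ g hg0 hgs
    have hQ1step : 0 < Q α (g 1) := by
      rw [← hg0]; exact hgs 0 (Nat.succ_pos n)
    have harm := hh_harmonic_of_one hQ0 hQ1 hf h1 hQ1step
    match d with
    | Nat.succ d' =>
      have h1' : hh Q f ℓ (g 1) (s - 1) = 1 := by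
        have := harm.2
        rwa [hE, if_neg (by omega : ¬ s - 1 = ℓ)] at this
      have := ih (g 1) (s - 1) h1' (by omega) i d' u (by omega) (by push_cast at hi ⊢; omega)
        hiℓ (fun k => g (k + 1)) rfl (fun k hk => hgs (k+1) (by omega))
      simpa using this
    | 0 =>
      -- all moves are up: i = s + u with u = n+1 ≥ 1, so s + 1 ≤ i < ℓ
      have hu : u = n + 1 := by omega
      have hsi : s + 1 ≤ i := by push_cast at hi; omega
      have h1' : hh Q f ℓ (g 1) (s + 1) = 1 := by
        have := harm.1
        rwa [hE, if_neg (by omega : ¬ s + 1 = ℓ)] at this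
      have := ih (g 1) (s + 1) h1' (by omega) i 0 n (by omega) (by push_cast at hi ⊢; omega)
        hiℓ (fun k => g (k + 1)) rfl (fun k hk => hgs (k+1) (by omega))
      simpa using this

def Reach (Q : Matrix (Fin m) (Fin m) ℝ) (α β : Fin m) (n : ℕ) : Prop :=
  ∃ g : ℕ → Fin m, g 0 = α ∧ g n = β ∧ ∀ k < n, 0 < Q (g k) (g (k+1))

lemma reach_trans {α β γ : Fin m} {a b : ℕ} (h1 : Reach Q α β a) (h2 : Reach Q β γ b) :
    Reach Q α γ (a + b) := by
  obtain ⟨g, hg0, hga, hgs⟩ := h1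
  obtain ⟨g', hg0', hgb', hgs'⟩ := h2
  refine ⟨fun k => if k < a then g k else g' (k - a), ?_, ?_, ?_⟩
  · by_cases h : 0 < a
    · simp [h, hg0]
    · have ha : a = 0 := by omega
      simp only [ha]
      simpa using hg0'.trans (by rw [← hg0, ← hga, ha])
  · have h : ¬ a + b < a := by omega
    simp only [h, if_false]
    simpa using hgb'
  · intro k hk
    by_cases h : k + 1 ≤ a
    · have hk' : k < a := by omega
      have e : (if k + 1 < a then g (k+1) else g' (k + 1 - a)) = g (k + 1) := by
        by_cases h2' : k + 1 < a
        · simp [h2']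
        · have : k + 1 = a := by omega
          simp [h2', this, ← hga, hg0']
      simp only [if_pos hk', e]
      exact hgs k hk'
    · have hk1 : ¬ k < a := by omega
      have hk2 : ¬ k + 1 < a := by omega
      simp only [if_neg hk1, if_neg hk2]
      have e : k + 1 - a = (k - a) + 1 := by omega
      rw [e]
      exact hgs' (k - a) (by omega)

lemma reach_single {α β : Fin m} (hβ : 0 < Q α β) : Reach Q α β 1 := by
  refine ⟨fun k => if k = 0 then α else β, by simp, by simp, ?_⟩
  intro k hk
  have : k = 0 := by omega
  simp [this, hβ]

lemma reach_cycle (hQ0 : ∀ a b, 0 ≤ Q a b) (hQ1 : ∀ a, ∑ b, Q a b = 1)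
    (hirr : MatIrreducible Q) (α : Fin m) : ∃ c, 1 ≤ c ∧ Reach Q α α c := by
  obtain ⟨β, hβ⟩ := exists_pos_entry hQ0 hQ1 α
  obtain ⟨n, g, hg0, hgn, hgs⟩ := hirr β α
  exact ⟨1 + n, by omega, reach_trans (reach_single hβ) ⟨g, hg0, hgn, hgs⟩⟩

lemma reach_pump {α β : Fin m} {n c : ℕ} (h1 : Reach Q α β n) (hc : Reach Q β β c) :
    ∀ k, Reach Q α β (n + k * c) := by
  intro k
  induction k with
  | zero => simpa using h1
  | succ k ih =>
    have : n + (k + 1) * c = (n + k * c) + c := by ring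
    rw [this]
    exact reach_trans ih hc

lemma solve_du {n : ℕ} {s i : ℤ} (h1 : (s - i).natAbs ≤ n) (h2 : Even ((n : ℤ) + i - s)) :
    ∃ d u : ℕ, d + u = n ∧ i = s - d + u := by
  obtain ⟨r, hr⟩ := h2
  exact ⟨((n : ℤ) - r).toNat, r.toNat, by omega, by omega⟩

/-- Propagation of a.s. hitting from two adjacent sources below `ℓ` to everywhere below `ℓ`. -/
lemma propagate_left (hQ0 : ∀ a b, 0 ≤ Q a b) (hQ1 : ∀ a, ∑ b, Q a b = 1)
    (hf : ∀ a k, f a k ∈ Set.Ioo (0:ℝ) 1) (hirr : MatIrreducible Q)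
    {α₀ : Fin m} {j : ℤ} (hj : j + 1 < ℓ)
    (h1 : hh Q f ℓ α₀ j = 1) (h2 : hh Q f ℓ α₀ (j+1) = 1) :
    ∀ (α : Fin m) (i : ℤ), i < ℓ → hh Q f ℓ α i = 1 := by
  intro α i hi
  obtain ⟨n₁, g₁, hg₁0, hg₁n, hg₁s⟩ := hirr α₀ α
  have R1 : Reach Q α₀ α n₁ := ⟨g₁, hg₁0, hg₁n, hg₁s⟩
  obtain ⟨c, hc1, Rc⟩ := reach_cycle hQ0 hQ1 hirr α
  set K := (j - i).natAbs + 1 with hK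
  set n := n₁ + K * c with hn
  have R : Reach Q α₀ α n := reach_pump R1 Rc K
  have hnK : K ≤ n := by
    calc K ≤ K * c := Nat.le_mul_of_pos_right K (by omega)
      _ ≤ n := by omega
  obtain ⟨g, hg0, hgn, hgs⟩ := R
  rcases Int.even_or_odd ((n : ℤ) + i - j) with he | ho
  · -- source j
    obtain ⟨d, u, hdu, hi'⟩ := solve_du (n := n) (s := j) (i := i) (by omega) he
    have := descend hQ0 hQ1 hf n α₀ j h1 (by omega) i d u hdu hi' hi g hg0 hgs
    rwa [hgn] at this
  · -- source j + 1
    have he' : Even ((n : ℤ) + i - (j + 1)) := by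
      rcases ho with ⟨r, hr⟩
      exact ⟨r, by omega⟩
    obtain ⟨d, u, hdu, hi'⟩ := solve_du (n := n) (s := j + 1) (i := i) (by omega) he'
    have := descend hQ0 hQ1 hf n α₀ (j+1) h2 (by omega) i d u hdu hi' hi g hg0 hgs
    rwa [hgn] at this


lemma sup_refl_eq (i' : ℤ) :
    (⨆ α, hh Q (frefl f) (-ℓ) α i') = ⨆ α, hh Q f ℓ α (-i') :=
  iSup_congr fun α => hh_refl α i'

lemma part1_right (hm : 0 < m) (hQ0 : ∀ a b, 0 ≤ Q a b) (hQ1 : ∀ a, ∑ b, Q a b = 1)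
    (hf : ∀ a k, f a k ∈ Set.Ioo (0:ℝ) 1)
    (hex : ∃ i, ℓ < i ∧ (⨆ α, hh Q f ℓ α i) = 1) :
    ∀ i, ℓ < i → (⨆ α, hh Q f ℓ α i) = 1 := by
  obtain ⟨i₀, hi₀, hsup⟩ := hex
  intro i hi
  have key := part1_left (f := frefl f) (ℓ := -ℓ) hm hQ0 hQ1 (frefl_mem hf)
    ⟨-i₀, by omega, by rw [sup_refl_eq]; simpa using hsup⟩ (-i) (by omega)
  rw [sup_refl_eq] at key
  simpa using key

lemma propagate_right (hQ0 : ∀ a b, 0 ≤ Q a b) (hQ1 : ∀ a, ∑ b, Q a b = 1)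
    (hf : ∀ a k, f a k ∈ Set.Ioo (0:ℝ) 1) (hirr : MatIrreducible Q)
    {α₀ : Fin m} {j : ℤ} (hj : ℓ < j)
    (h1 : hh Q f ℓ α₀ j = 1) (h2 : hh Q f ℓ α₀ (j+1) = 1) :
    ∀ (α : Fin m) (i : ℤ), ℓ < i → hh Q f ℓ α i = 1 := by
  intro α i hi
  have h1' : hh Q (frefl f) (-ℓ) α₀ (-j - 1) = 1 := by
    rw [hh_refl]
    have : -(-j - 1) = j + 1 := by ring
    rw [this]; exact h2
  have h2' : hh Q (frefl f) (-ℓ) α₀ (-j - 1 + 1) = 1 := by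
    rw [hh_refl]
    have : -(-j - 1 + 1) = j := by ring
    rw [this]; exact h1
  have key := propagate_left (f := frefl f) (ℓ := -ℓ) hQ0 hQ1 (frefl_mem hf) hirr
    (by omega) h1' h2' α (-i) (by omega)
  rw [hh_refl] at key
  simpa using key

lemma hh_cross' (hQ0 : ∀ a b, 0 ≤ Q a b) (hQ1 : ∀ a, ∑ b, Q a b = 1)
    (hf : ∀ a k, f a k ∈ Set.Ioo (0:ℝ) 1) {ℓ'' : ℤ} (hℓ : ℓ'' ≤ ℓ) {α : Fin m} {j : ℤ}
    (hj : ℓ < j) : hh Q f ℓ'' α j ≤ hh Q f ℓ α j := by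
  have e1 : hh Q (frefl f) (-ℓ'') α (-j) = hh Q f ℓ'' α j := by
    rw [hh_refl]; norm_num
  have e2 : hh Q (frefl f) (-ℓ) α (-j) = hh Q f ℓ α j := by
    rw [hh_refl]; norm_num
  have := hh_cross (f := frefl f) (ℓ := -ℓ) (ℓ' := -ℓ'') hQ0 hQ1 (frefl_mem hf)
    (by omega) (α := α) (j := -j) (by omega)
  rw [e1, e2] at this
  exact this

end Analysis

section MeasurePart

variable {Q : Matrix (Fin m) (Fin m) ℝ} {f : Fin m → ℤ → ℝ} {ℓ : ℤ}
variable {μ : Fin m → ℤ → Measure (ℕ → Fin m × ℤ)}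

/-- Cylinder sets. -/
def cylSet (n : ℕ) (traj : ℕ → Fin m × ℤ) : Set (ℕ → Fin m × ℤ) := {ω | ∀ k ≤ n, ω k = traj k}

lemma measurableSet_cylSet (n : ℕ) (traj : ℕ → Fin m × ℤ) : MeasurableSet (cylSet n traj) := by
  have : cylSet n traj = ⋂ (k : ℕ) (_ : k ≤ n), (fun ω => ω k) ⁻¹' {traj k} := by
    ext ω; simp [cylSet]
  rw [this]
  exact MeasurableSet.iInter fun k => MeasurableSet.iInter fun _ =>
    (measurable_pi_apply k) (measurableSet_singleton _)

/-- The collection of cylinder sets. -/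
def cylCol : Set (Set (ℕ → Fin m × ℤ)) := {s | ∃ n traj, s = cylSet n traj}

lemma isPiSystem_cylCol : IsPiSystem (cylCol (m := m)) := by
  have key : ∀ (n₁ n₂ : ℕ) (t₁ t₂ : ℕ → Fin m × ℤ), n₁ ≤ n₂ →
      (cylSet n₁ t₁ ∩ cylSet n₂ t₂).Nonempty →
      cylSet n₁ t₁ ∩ cylSet n₂ t₂ = cylSet n₂ t₂ := by
    intro n₁ n₂ t₁ t₂ hn ⟨ω₀, hω₁, hω₂⟩
    apply Set.inter_eq_self_of_subset_right
    intro x hx k hk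
    calc x k = t₂ k := hx k (le_trans hk hn)
      _ = ω₀ k := (hω₂ k (le_trans hk hn)).symm
      _ = t₁ k := hω₁ k hk
  rintro s₁ ⟨n₁, t₁, rfl⟩ s₂ ⟨n₂, t₂, rfl⟩ hne
  rcases le_total n₁ n₂ with h | h
  · rw [key n₁ n₂ t₁ t₂ h hne]
    exact ⟨n₂, t₂, rfl⟩
  · rw [Set.inter_comm] at hne ⊢
    rw [key n₂ n₁ t₂ t₁ h hne]
    exact ⟨n₁, t₁, rfl⟩

lemma coord_fiber_mem_gen (k : ℕ) (v : Fin m × ℤ) :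
    MeasurableSet[MeasurableSpace.generateFrom (cylCol (m := m))] {ω : ℕ → Fin m × ℤ | ω k = v} := by
  have hset : {ω : ℕ → Fin m × ℤ | ω k = v} =
      ⋃ (g : {g : Fin (k+1) → Fin m × ℤ // g (Fin.last k) = v}),
        cylSet k (fun t => if h : t < k + 1 then (g : Fin (k+1) → Fin m × ℤ) ⟨t, h⟩ else v) := by
    ext ω
    simp only [Set.mem_setOf_eq, Set.mem_iUnion, cylSet]
    constructor
    · intro hω
      refine ⟨⟨fun t => ω t, by simpa [Fin.last] using hω⟩, ?_⟩
      intro t ht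
      simp only [Set.mem_setOf_eq]
      rw [dif_pos (by omega : t < k + 1)]
    · rintro ⟨⟨g, hg⟩, hmem⟩
      have h1 := hmem k le_rfl
      simp only [Set.mem_setOf_eq] at h1
      rw [dif_pos (by omega : k < k + 1)] at h1
      rw [h1]
      exact hg
  rw [hset]
  exact MeasurableSet.iUnion fun g =>
    MeasurableSpace.measurableSet_generateFrom ⟨k, _, rfl⟩

lemma pi_eq_generateFrom_cylCol :
    (MeasurableSpace.pi : MeasurableSpace (ℕ → Fin m × ℤ)) =
      MeasurableSpace.generateFrom (cylCol (m := m)) := by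
  apply le_antisymm
  · refine iSup_le fun k => ?_
    intro s hs
    rw [MeasurableSpace.measurableSet_comap] at hs
    obtain ⟨A, hA, rfl⟩ := hs
    have : (fun ω : ℕ → Fin m × ℤ => ω k) ⁻¹' A
        = ⋃ v ∈ A, {ω : ℕ → Fin m × ℤ | ω k = v} := by
      ext ω; simp
    rw [this]
    exact MeasurableSet.biUnion (Set.to_countable A) fun v _ => coord_fiber_mem_gen k v
  · apply MeasurableSpace.generateFrom_le
    rintro s ⟨n, traj, rfl⟩
    exact measurableSet_cylSet n traj

/-- The one-step shift. -/
def shiftω : (ℕ → Fin m × ℤ) → (ℕ → Fin m × ℤ) := fun ω n => ω (n + 1)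

lemma measurable_shiftω : Measurable (shiftω (m := m)) :=
  measurable_pi_lambda _ fun n => measurable_pi_apply (n + 1)

/-- Prepend a state to a trajectory. -/
def consT (s₀ : Fin m × ℤ) (t : ℕ → Fin m × ℤ) : ℕ → Fin m × ℤ
  | 0 => s₀
  | k + 1 => t k

lemma cylSet_eq_IsQuenchedLaw (hμ : IsQuenchedLaw Q f μ) (α : Fin m) (i : ℤ)
    (n : ℕ) (traj : ℕ → Fin m × ℤ) :
    μ α i (cylSet n traj) = (if traj 0 = (α, i) then 1 else 0) *
      ENNReal.ofReal (∏ k ∈ Finset.range n, step Q f (traj k) (traj (k + 1))) :=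
  (hμ α i).2 n traj

lemma start_point_one (hμ : IsQuenchedLaw Q f μ) (α : Fin m) (i : ℤ) :
    μ α i {ω | ω 0 = (α, i)} = 1 := by
  have h0 : {ω : ℕ → Fin m × ℤ | ω 0 = (α, i)} = cylSet 0 (fun _ => (α, i)) := by
    ext ω; simp [cylSet, Nat.le_zero]
  rw [h0, cylSet_eq_IsQuenchedLaw hμ]
  simp

lemma start_point_compl_null (hμ : IsQuenchedLaw Q f μ) (α : Fin m) (i : ℤ) :
    μ α i {ω | ω 0 ≠ (α, i)} = 0 := by
  haveI := (hμ α i).1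
  have hm' : MeasurableSet {ω : ℕ → Fin m × ℤ | ω 0 = (α, i)} :=
    (measurable_pi_apply 0) (measurableSet_singleton _)
  have : {ω : ℕ → Fin m × ℤ | ω 0 ≠ (α, i)} = {ω | ω 0 = (α, i)}ᶜ := rfl
  rw [this, measure_compl hm' (measure_ne_top _ _), start_point_one hμ, measure_univ]
  simp

lemma step_nonneg (hQ0 : ∀ a b, 0 ≤ Q a b) (hf : ∀ a k, f a k ∈ Set.Ioo (0:ℝ) 1)
    (s s' : Fin m × ℤ) : 0 ≤ step Q f s s' := by
  unfold step
  apply mul_nonneg (hQ0 _ _)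
  split
  · exact (hf s'.1 s.2).1.le
  · split
    · linarith [(hf s'.1 s.2).2]
    · exact le_rfl

lemma prod_step_nonneg (hQ0 : ∀ a b, 0 ≤ Q a b) (hf : ∀ a k, f a k ∈ Set.Ioo (0:ℝ) 1)
    (n : ℕ) (traj : ℕ → Fin m × ℤ) :
    0 ≤ ∏ k ∈ Finset.range n, step Q f (traj k) (traj (k + 1)) :=
  Finset.prod_nonneg fun k _ => step_nonneg hQ0 hf _ _

/-- The one-step Markov property for the quenched law. -/
lemma markov_step (hμ : IsQuenchedLaw Q f μ) (hQ0 : ∀ a b, 0 ≤ Q a b)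
    (hQ1 : ∀ a, ∑ b, Q a b = 1) (hf : ∀ a k, f a k ∈ Set.Ioo (0:ℝ) 1)
    (α : Fin m) (i : ℤ) {B : Set (ℕ → Fin m × ℤ)} (hB : MeasurableSet B) :
    μ α i (shiftω ⁻¹' B) =
      ∑ β, (ENNReal.ofReal (Q α β * f β i) * μ β (i+1) B
        + ENNReal.ofReal (Q α β * (1 - f β i)) * μ β (i-1) B) := by
  haveI := (hμ α i).1
  set ν : Measure (ℕ → Fin m × ℤ) :=
    ∑ β, (ENNReal.ofReal (Q α β * f β i) • μ β (i+1)
      + ENNReal.ofReal (Q α β * (1 - f β i)) • μ β (i-1)) with hν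
  have hν_apply : ∀ s : Set (ℕ → Fin m × ℤ),
      ν s = ∑ β, (ENNReal.ofReal (Q α β * f β i) * μ β (i+1) s
        + ENNReal.ofReal (Q α β * (1 - f β i)) * μ β (i-1) s) := by
    intro s
    rw [hν]
    rw [Measure.coe_finset_sum]
    simp [Measure.coe_add, Measure.coe_smul, Finset.sum_apply, smul_eq_mul]
  have hmap : Measure.map shiftω (μ α i) = ν := by
    haveI : IsProbabilityMeasure (Measure.map shiftω (μ α i)) :=
      Measure.isProbabilityMeasure_map measurable_shiftω.aemeasurable
    refine ext_of_generate_finite cylCol pi_eq_generateFrom_cylCol isPiSystem_cylCol ?_ ?_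
    · rintro s ⟨n, traj, rfl⟩
      rw [Measure.map_apply measurable_shiftω (measurableSet_cylSet n traj)]
      -- LHS: decompose over the starting point
      have hdecomp : shiftω ⁻¹' cylSet n traj = ⋃ s₀ : Fin m × ℤ, cylSet (n+1) (consT s₀ traj) := by
        ext ω
        simp only [Set.mem_preimage, Set.mem_iUnion, cylSet, Set.mem_setOf_eq, shiftω]
        constructor
        · intro h
          refine ⟨ω 0, ?_⟩
          intro k hk
          match k with
          | 0 => rfl
          | k + 1 => exact h k (by omega)
        · rintro ⟨s₀, h⟩ k hk
          exact h (k+1) (by omega)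
      have hdisj : Pairwise (Function.onFun Disjoint
          fun s₀ : Fin m × ℤ => cylSet (n+1) (consT s₀ traj)) := by
        intro a b hab
        rw [Function.onFun, Set.disjoint_left]
        intro ω hωa hωb
        have h1 := hωa 0 (by omega)
        have h2 := hωb 0 (by omega)
        exact hab (h1.symm.trans h2 : (consT a traj) 0 = (consT b traj) 0)
      rw [hdecomp, measure_iUnion hdisj (fun s₀ => measurableSet_cylSet _ _)]
      have hval : ∀ s₀ : Fin m × ℤ, μ α i (cylSet (n+1) (consT s₀ traj)) =
          (if s₀ = (α, i) then 1 else 0) * ENNReal.ofReal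
            (∏ k ∈ Finset.range (n+1), step Q f (consT s₀ traj k) (consT s₀ traj (k+1))) := by
        intro s₀
        rw [cylSet_eq_IsQuenchedLaw hμ]
        rfl
      rw [tsum_eq_single ((α, i) : Fin m × ℤ) (by
        intro s₀ hs₀
        rw [hval s₀, if_neg hs₀, zero_mul])]
      rw [hval, if_pos rfl, one_mul]
      -- compute the product
      have hprod : ∏ k ∈ Finset.range (n+1), step Q f (consT (α,i) traj k) (consT (α,i) traj (k+1))
          = step Q f (α, i) (traj 0) * ∏ k ∈ Finset.range n, step Q f (traj k) (traj (k+1)) := by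
        rw [Finset.prod_range_succ']
        rw [mul_comm]
        congr 1
      rw [hprod]
      -- RHS
      rw [hν_apply]
      have hcyl : ∀ (β : Fin m) (x : ℤ), μ β x (cylSet n traj) =
          (if traj 0 = (β, x) then 1 else 0) *
            ENNReal.ofReal (∏ k ∈ Finset.range n, step Q f (traj k) (traj (k+1))) :=
        fun β x => cylSet_eq_IsQuenchedLaw hμ β x n traj
      set P := ENNReal.ofReal (∏ k ∈ Finset.range n, step Q f (traj k) (traj (k+1))) with hP
      have hrw : ∀ β : Fin m,
          ENNReal.ofReal (Q α β * f β i) * μ β (i+1) (cylSet n traj)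
            + ENNReal.ofReal (Q α β * (1 - f β i)) * μ β (i-1) (cylSet n traj)
          = (if traj 0 = (β, i+1) then ENNReal.ofReal (Q α β * f β i) * P else 0)
            + (if traj 0 = (β, i-1) then ENNReal.ofReal (Q α β * (1 - f β i)) * P else 0) := by
        intro β
        rw [hcyl β (i+1), hcyl β (i-1)]
        by_cases h1 : traj 0 = (β, i+1)
        · have h2 : ¬ traj 0 = (β, i-1) := by
            rw [h1, Prod.mk.injEq]
            push_neg
            intro
            omega
          simp [h1, h2]
        · by_cases h2 : traj 0 = (β, i-1) <;> simp [h1, h2]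
      rw [Finset.sum_congr rfl (fun β _ => hrw β), Finset.sum_add_distrib]
      have hgen : ∀ (x : ℤ) (E : Fin m → ℝ≥0∞),
          (∑ β, if traj 0 = (β, x) then E β else 0)
            = if (traj 0).2 = x then E (traj 0).1 else 0 := by
        intro x E
        have hsummand : ∀ β, (if traj 0 = (β, x) then E β else 0)
            = if (traj 0).2 = x then (if β = (traj 0).1 then E β else 0) else 0 := by
          intro β
          by_cases hβ : β = (traj 0).1 <;> by_cases hx : (traj 0).2 = x <;>
            simp [hβ, hx, Prod.ext_iff, eq_comm]
        rw [Finset.sum_congr rfl fun β _ => hsummand β]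
        by_cases hx : (traj 0).2 = x
        · simp [hx, Finset.sum_ite_eq']
        · simp [hx]
      have hs1 := hgen (i+1) (fun β => ENNReal.ofReal (Q α β * f β i) * P)
      have hs2 := hgen (i-1) (fun β => ENNReal.ofReal (Q α β * (1 - f β i)) * P)
      rw [hs1, hs2]
      -- now compare with ofReal (step (α,i) (traj 0) * ∏)
      have hstep : step Q f (α, i) (traj 0) =
          Q α (traj 0).1 * (if (traj 0).2 = i + 1 then f (traj 0).1 i
            else if (traj 0).2 = i - 1 then 1 - f (traj 0).1 i else 0) := rfl
      by_cases h1 : (traj 0).2 = i + 1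
      · rw [if_pos h1, if_neg (by omega)]
        rw [hstep, if_pos h1, add_zero, ENNReal.ofReal_mul
          (mul_nonneg (hQ0 _ _) (hf _ _).1.le)]
      · rw [if_neg h1]
        by_cases h2 : (traj 0).2 = i - 1
        · rw [if_pos h2, hstep, if_neg h1, if_pos h2, zero_add,
            ENNReal.ofReal_mul (mul_nonneg (hQ0 _ _) (by linarith [(hf (traj 0).1 i).2]))]
        · rw [if_neg h2, hstep, if_neg h1, if_neg h2]
          simp
    · -- univ
      rw [Measure.map_apply measurable_shiftω MeasurableSet.univ]
      simp only [Set.preimage_univ, measure_univ]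
      rw [hν_apply]
      have : ∀ β : Fin m, ENNReal.ofReal (Q α β * f β i) * μ β (i+1) Set.univ
          + ENNReal.ofReal (Q α β * (1 - f β i)) * μ β (i-1) Set.univ
          = ENNReal.ofReal (Q α β) := by
        intro β
        haveI := (hμ β (i+1)).1
        haveI := (hμ β (i-1)).1
        rw [measure_univ, measure_univ, mul_one, mul_one,
          ← ENNReal.ofReal_add (mul_nonneg (hQ0 _ _) (hf _ _).1.le)
            (mul_nonneg (hQ0 _ _) (by linarith [(hf β i).2]))]
        congr 1
        ring
      rw [Finset.sum_congr rfl (fun β _ => this β),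
        ← ENNReal.ofReal_sum_of_nonneg (fun β _ => hQ0 α β), hQ1 α, ENNReal.ofReal_one]
  rw [← Measure.map_apply measurable_shiftω hB, hmap, hν_apply]


/-- Hitting `ℓ` by time `N` (at a time `≥ 1`). -/
def hitBy (ℓ : ℤ) (N : ℕ) : Set (ℕ → Fin m × ℤ) := {ω | ∃ n, 1 ≤ n ∧ n ≤ N ∧ (ω n).2 = ℓ}

lemma measurableSet_hitBy (ℓ : ℤ) (N : ℕ) : MeasurableSet (hitBy (m := m) ℓ N) := by
  have : hitBy (m := m) ℓ N = ⋃ (n : ℕ) (_ : 1 ≤ n ∧ n ≤ N),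
      (fun ω : ℕ → Fin m × ℤ => (ω n).2) ⁻¹' {ℓ} := by
    ext ω; simp [hitBy]; tauto
  rw [this]
  exact MeasurableSet.iUnion fun n => MeasurableSet.iUnion fun _ =>
    (measurable_snd.comp (measurable_pi_apply n)) (measurableSet_singleton _)

lemma measurableSet_hitEvent (ℓ : ℤ) : MeasurableSet (hitEvent (ι := Fin m) ℓ) := by
  have : hitEvent (ι := Fin m) ℓ = ⋃ (n : ℕ) (_ : 1 ≤ n),
      (fun ω : ℕ → Fin m × ℤ => (ω n).2) ⁻¹' {ℓ} := by
    ext ω; simp [hitEvent]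
  rw [this]
  exact MeasurableSet.iUnion fun n => MeasurableSet.iUnion fun _ =>
    (measurable_snd.comp (measurable_pi_apply n)) (measurableSet_singleton _)

/-- The fundamental identity: the measure of hitting by time `N` equals the recursion `uN`. -/
lemma measure_hitBy (hμ : IsQuenchedLaw Q f μ) (hQ0 : ∀ a b, 0 ≤ Q a b)
    (hQ1 : ∀ a, ∑ b, Q a b = 1) (hf : ∀ a k, f a k ∈ Set.Ioo (0:ℝ) 1) :
    ∀ (N : ℕ) (α : Fin m) (i : ℤ), μ α i (hitBy ℓ N) = ENNReal.ofReal (uN Q f ℓ N α i) := by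
  intro N
  induction N with
  | zero =>
    intro α i
    have : hitBy (m := m) ℓ 0 = ∅ := by
      ext ω; simp [hitBy]
    rw [this]
    simp [uN]
  | succ N ih =>
    intro α i
    set B : Set (ℕ → Fin m × ℤ) := hitBy ℓ N ∪ {ω | (ω 0).2 = ℓ} with hBdef
    have hBmeas : MeasurableSet B :=
      (measurableSet_hitBy ℓ N).union
        ((measurable_snd.comp (measurable_pi_apply 0)) (measurableSet_singleton ℓ))
    have hset : hitBy (m := m) ℓ (N+1) = shiftω ⁻¹' B := by
      ext ω
      simp only [hitBy, hBdef, Set.mem_preimage, Set.mem_union, Set.mem_setOf_eq, shiftω]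
      constructor
      · rintro ⟨n, hn1, hnN, hnℓ⟩
        match n, hn1 with
        | 1, _ => exact Or.inr hnℓ
        | Nat.succ (Nat.succ k), _ => exact Or.inl ⟨k + 1, by omega, by omega, hnℓ⟩
      · rintro (⟨n, hn1, hnN, hnℓ⟩ | h0)
        · exact ⟨n + 1, by omega, by omega, hnℓ⟩
        · exact ⟨1, by omega, by omega, h0⟩
    have hB_val : ∀ (β : Fin m) (j : ℤ), μ β j B =
        if j = ℓ then 1 else ENNReal.ofReal (uN Q f ℓ N β j) := by
      intro β j
      haveI := (hμ β j).1
      by_cases hj : j = ℓ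
      · rw [if_pos hj]
        refine le_antisymm prob_le_one ?_
        calc (1 : ℝ≥0∞) = μ β j {ω | ω 0 = (β, j)} := (start_point_one hμ β j).symm
          _ ≤ μ β j B := by
            apply measure_mono
            intro ω hω
            right
            simp only [Set.mem_setOf_eq] at hω ⊢
            rw [hω, hj]
      · rw [if_neg hj]
        have hsub : {ω : ℕ → Fin m × ℤ | (ω 0).2 = ℓ} ⊆ {ω | ω 0 ≠ (β, j)} := by
          intro ω hω
          simp only [Set.mem_setOf_eq] at hω ⊢
          intro hcon
          rw [hcon] at hω
          exact hj hω
        have hnull : μ β j {ω : ℕ → Fin m × ℤ | (ω 0).2 = ℓ} = 0 :=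
          le_antisymm (le_trans (measure_mono hsub)
            (le_of_eq (start_point_compl_null hμ β j))) zero_le
        rw [hBdef]
        rw [le_antisymm (le_trans (measure_union_le _ _) (by rw [hnull, add_zero]))
          (measure_mono Set.subset_union_left)]
        exact ih β j
    rw [hset, markov_step hμ hQ0 hQ1 hf α i hBmeas]
    have hterm : ∀ β : Fin m,
        ENNReal.ofReal (Q α β * f β i) * μ β (i+1) B
          + ENNReal.ofReal (Q α β * (1 - f β i)) * μ β (i-1) B
        = ENNReal.ofReal (Q α β * (f β i * (if i+1 = ℓ then 1 else uN Q f ℓ N β (i+1))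
            + (1 - f β i) * (if i-1 = ℓ then 1 else uN Q f ℓ N β (i-1)))) := by
      intro β
      rw [hB_val β (i+1), hB_val β (i-1)]
      have e1 : (if i+1 = ℓ then (1:ℝ≥0∞) else ENNReal.ofReal (uN Q f ℓ N β (i+1)))
          = ENNReal.ofReal (if i+1 = ℓ then 1 else uN Q f ℓ N β (i+1)) := by
        split <;> simp
      have e2 : (if i-1 = ℓ then (1:ℝ≥0∞) else ENNReal.ofReal (uN Q f ℓ N β (i-1)))
          = ENNReal.ofReal (if i-1 = ℓ then 1 else uN Q f ℓ N β (i-1)) := by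
        split <;> simp
      rw [e1, e2]
      have n1 : (0:ℝ) ≤ if i+1 = ℓ then 1 else uN Q f ℓ N β (i+1) := by
        split
        · norm_num
        · exact uN_nonneg hQ0 hf N β (i+1)
      have n2 : (0:ℝ) ≤ if i-1 = ℓ then 1 else uN Q f ℓ N β (i-1) := by
        split
        · norm_num
        · exact uN_nonneg hQ0 hf N β (i-1)
      rw [← ENNReal.ofReal_mul (mul_nonneg (hQ0 _ _) (hf β i).1.le),
        ← ENNReal.ofReal_mul (mul_nonneg (hQ0 _ _) (by linarith [(hf β i).2])),
        ← ENNReal.ofReal_add (mul_nonneg (mul_nonneg (hQ0 _ _) (hf β i).1.le) n1) (mul_nonneg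
          (mul_nonneg (hQ0 _ _) (by linarith [(hf β i).2])) n2)]
      congr 1
      ring
    rw [Finset.sum_congr rfl fun β _ => hterm β]
    rw [← ENNReal.ofReal_sum_of_nonneg]
    · rfl
    · intro β _
      refine term_nonneg (hQ0 α β) (hf β i).1.le (hf β i).2.le ?_ ?_
      · split
        · norm_num
        · exact uN_nonneg hQ0 hf N β (i+1)
      · split
        · norm_num
        · exact uN_nonneg hQ0 hf N β (i-1)

lemma measure_hitEvent (hμ : IsQuenchedLaw Q f μ) (hQ0 : ∀ a b, 0 ≤ Q a b)
    (hQ1 : ∀ a, ∑ b, Q a b = 1) (hf : ∀ a k, f a k ∈ Set.Ioo (0:ℝ) 1)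
    (α : Fin m) (i : ℤ) :
    μ α i (hitEvent ℓ) = ENNReal.ofReal (hh Q f ℓ α i) := by
  have hunion : hitEvent (ι := Fin m) ℓ = ⋃ N, hitBy ℓ N := by
    ext ω
    simp only [hitEvent, hitBy, Set.mem_iUnion, Set.mem_setOf_eq]
    constructor
    · rintro ⟨n, hn1, hnℓ⟩
      exact ⟨n, n, hn1, le_rfl, hnℓ⟩
    · rintro ⟨N, n, hn1, _, hnℓ⟩
      exact ⟨n, hn1, hnℓ⟩
  have hdir : Directed (· ⊆ ·) (fun N => hitBy (m := m) ℓ N) := by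
    apply Monotone.directed_le
    intro N M hNM ω
    rintro ⟨n, hn1, hnN, hℓ'⟩
    exact ⟨n, hn1, by omega, hℓ'⟩
  rw [hunion, hdir.measure_iUnion]
  rw [funext fun N => measure_hitBy (ℓ := ℓ) hμ hQ0 hQ1 hf N α i]
  -- ⨆ N, ofReal (uN ...) = ofReal (hh ...)
  apply le_antisymm
  · exact iSup_le fun N => ENNReal.ofReal_le_ofReal (uN_le_hh hQ0 hQ1 hf N α i)
  · set L := ⨆ N, ENNReal.ofReal (uN Q f ℓ N α i) with hL
    have hLle : L ≤ 1 := by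
      rw [hL]
      refine iSup_le fun N => ?_
      calc ENNReal.ofReal (uN Q f ℓ N α i) ≤ ENNReal.ofReal 1 :=
            ENNReal.ofReal_le_ofReal (uN_le_one hQ0 hQ1 hf N α i)
        _ = 1 := ENNReal.ofReal_one
    have hLne : L ≠ ⊤ := ne_top_of_le_ne_top ENNReal.one_ne_top hLle
    rw [ENNReal.ofReal_le_iff_le_toReal hLne]
    refine ciSup_le fun N => ?_
    calc uN Q f ℓ N α i = (ENNReal.ofReal (uN Q f ℓ N α i)).toReal := by
          rw [ENNReal.toReal_ofReal (uN_nonneg hQ0 hf N α i)]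
      _ ≤ L.toReal := ENNReal.toReal_mono hLne (le_iSup
          (fun N => ENNReal.ofReal (uN Q f ℓ N α i)) N)

lemma measure_hitEvent_toReal (hμ : IsQuenchedLaw Q f μ) (hQ0 : ∀ a b, 0 ≤ Q a b)
    (hQ1 : ∀ a, ∑ b, Q a b = 1) (hf : ∀ a k, f a k ∈ Set.Ioo (0:ℝ) 1)
    (α : Fin m) (i : ℤ) :
    (μ α i (hitEvent ℓ)).toReal = hh Q f ℓ α i := by
  rw [measure_hitEvent hμ hQ0 hQ1 hf α i,
    ENNReal.toReal_ofReal (hh_nonneg hQ0 hf α i)]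

lemma measure_hitEvent_eq_one_iff (hμ : IsQuenchedLaw Q f μ) (hQ0 : ∀ a b, 0 ≤ Q a b)
    (hQ1 : ∀ a, ∑ b, Q a b = 1) (hf : ∀ a k, f a k ∈ Set.Ioo (0:ℝ) 1)
    (α : Fin m) (i : ℤ) :
    μ α i (hitEvent ℓ) = 1 ↔ hh Q f ℓ α i = 1 := by
  rw [measure_hitEvent hμ hQ0 hQ1 hf α i]
  constructor
  · intro h
    have := congrArg ENNReal.toReal h
    rwa [ENNReal.toReal_ofReal (hh_nonneg hQ0 hf α i), ENNReal.toReal_one] at this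
  · intro h
    rw [h, ENNReal.ofReal_one]

end MeasurePart

section EnvMeas

variable {E : Type*} [MeasurableSpace E]

lemma measurable_uN_env (Q : Matrix (Fin m) (Fin m) ℝ) (p : Fin m → ℤ → E → ℝ)
    (hp : ∀ a k, Measurable (p a k)) (ℓ : ℤ) :
    ∀ (N : ℕ) (α : Fin m) (i : ℤ),
      Measurable fun e => uN Q (fun a k => p a k e) ℓ N α i := by
  intro N
  induction N with
  | zero => intro α i; simp only [uN]; exact measurable_const
  | succ N ih =>
    intro α i
    show Measurable fun e => ∑ β, Q α β *
      ((p β i e) * (if i+1 = ℓ then 1 else uN Q (fun a k => p a k e) ℓ N β (i+1))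
        + (1 - p β i e) * (if i-1 = ℓ then 1 else uN Q (fun a k => p a k e) ℓ N β (i-1)))
    apply Finset.measurable_sum
    intro β _
    apply Measurable.const_mul
    apply Measurable.add
    · apply Measurable.mul (hp β i)
      by_cases h : i + 1 = ℓ
      · simp only [if_pos h]; exact measurable_const
      · simp only [if_neg h]; exact ih β (i+1)
    · apply Measurable.mul (measurable_const.sub (hp β i))
      by_cases h : i - 1 = ℓ
      · simp only [if_pos h]; exact measurable_const
      · simp only [if_neg h]; exact ih β (i-1)

lemma measurable_hh_env (Q : Matrix (Fin m) (Fin m) ℝ) (p : Fin m → ℤ → E → ℝ)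
    (hp : ∀ a k, Measurable (p a k)) (ℓ : ℤ)
    (hQ0 : ∀ a b, 0 ≤ Q a b) (hQ1 : ∀ a, ∑ b, Q a b = 1)
    (hp01 : ∀ a k e, p a k e ∈ Set.Ioo (0:ℝ) 1) (α : Fin m) (i : ℤ) :
    Measurable fun e => hh Q (fun a k => p a k e) ℓ α i := by
  apply measurable_of_tendsto_metrizable
    (f := fun N e => uN Q (fun a k => p a k e) ℓ N α i)
    (fun N => measurable_uN_env Q p hp ℓ N α i)
  rw [tendsto_pi_nhds]
  intro e
  exact tendsto_uN hQ0 hQ1 (fun a k => hp01 a k e) α i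

end EnvMeas

theorem stmt4_prop_time3 {m : ℕ} (hm : 0 < m)
    {E : Type*} [MeasurableSpace E] (P : Measure E) [IsProbabilityMeasure P]
    (hPc : P.IsComplete) (T : E → E) (hT : Ergodic T P)
    (Q : Matrix (Fin m) (Fin m) ℝ)
    (hQ0 : ∀ α β, 0 ≤ Q α β) (hQ1 : ∀ α, ∑ β, Q α β = 1)
    (p : Fin m → ℤ → E → ℝ) (hpmeas : ∀ α k, Measurable (p α k))
    (hp01 : ∀ α k e, p α k e ∈ Set.Ioo (0 : ℝ) 1)
    (hpT : ∀ α k e, p α k (T e) = p α (k + 1) e)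
    (μ : E → Fin m → ℤ → Measure (ℕ → Fin m × ℤ))
    (hμ : ∀ e, IsQuenchedLaw Q (fun α k => p α k e) (μ e))
    (ℓ : ℤ) :
    (∀ e : E,
      ((∃ i < ℓ, fnorm (μ e) i ℓ = 1) → ∀ i < ℓ, fnorm (μ e) i ℓ = 1) ∧
      ((∃ i, ℓ < i ∧ fnorm (μ e) i ℓ = 1) → ∀ i, ℓ < i → fnorm (μ e) i ℓ = 1)) ∧
    (MatIrreducible Q →
      ((∃ (α : Fin m) (i : ℤ), i < ℓ ∧ ∀ᵐ e ∂P, μ e α i (hitEvent ℓ) = 1) →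
        ∀ (α : Fin m) (i : ℤ), i < ℓ → ∀ᵐ e ∂P, μ e α i (hitEvent ℓ) = 1) ∧
      ((∃ (α : Fin m) (i : ℤ), ℓ < i ∧ ∀ᵐ e ∂P, μ e α i (hitEvent ℓ) = 1) →
        ∀ (α : Fin m) (i : ℤ), ℓ < i → ∀ᵐ e ∂P, μ e α i (hitEvent ℓ) = 1)) := by
  have hfe : ∀ (e : E) (a : Fin m) (k : ℤ), (fun a k => p a k e) a k ∈ Set.Ioo (0:ℝ) 1 :=
    fun e a k => hp01 a k e
  have hfnorm : ∀ (e : E) (i : ℤ), fnorm (μ e) i ℓ = ⨆ α, hh Q (fun a k => p a k e) ℓ α i := by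
    intro e i
    exact iSup_congr fun α => measure_hitEvent_toReal (hμ e) hQ0 hQ1 (hfe e) α i
  have hone : ∀ (e : E) (ℓ' : ℤ) (α : Fin m) (i : ℤ),
      μ e α i (hitEvent ℓ') = 1 ↔ hh Q (fun a k => p a k e) ℓ' α i = 1 :=
    fun e ℓ' α i => measure_hitEvent_eq_one_iff (hμ e) hQ0 hQ1 (hfe e) α i
  have hshift_pt : ∀ (e : E) (ℓ' : ℤ) (α : Fin m) (i : ℤ),
      hh Q (fun a k => p a k (T e)) ℓ' α i = hh Q (fun a k => p a k e) (ℓ'+1) α (i+1) := by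
    intro e ℓ' α i
    have hFe : (fun a k => p a k (T e)) = fshift (fun a k => p a k e) := by
      funext a k
      exact hpT a k e
    rw [hFe, hh_shift]
  constructor
  · -- part 1, for every environment
    intro e
    constructor
    · rintro ⟨i, hi, hfi⟩ i' hi'
      rw [hfnorm e i']
      refine part1_left hm hQ0 hQ1 (hfe e) ⟨i, hi, ?_⟩ i' hi'
      rw [← hfnorm e i]
      exact hfi
    · rintro ⟨i, hi, hfi⟩ i' hi'
      rw [hfnorm e i']
      refine part1_right hm hQ0 hQ1 (hfe e) ⟨i, hi, ?_⟩ i' hi'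
      rw [← hfnorm e i]
      exact hfi
  · intro hirr
    constructor
    · -- part 2, left of ℓ
      rintro ⟨α₀, i₀, hi₀, hae⟩ α i hi
      have hae0 : ∀ᵐ e ∂P, hh Q (fun a k => p a k e) ℓ α₀ i₀ = 1 :=
        hae.mono fun e he => (hone e ℓ α₀ i₀).1 he
      obtain ⟨β₀, hβ₀⟩ := exists_pos_entry hQ0 hQ1 α₀
      have hae1 : ∀ᵐ e ∂P, hh Q (fun a k => p a k e) ℓ β₀ (i₀ - 1) = 1 := by
        refine hae0.mono fun e he => ?_
        have := (hh_harmonic_of_one hQ0 hQ1 (hfe e) he hβ₀).2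
        rwa [hE, if_neg (by omega : ¬ i₀ - 1 = ℓ)] at this
      -- push forward through T : a.e. hh (F e) (ℓ+1) β₀ i₀ = 1
      have haeT : ∀ᵐ e ∂P, hh Q (fun a k => p a k e) (ℓ+1) β₀ (i₀ - 1 + 1) = 1 := by
        have hbad : P {e | ¬ hh Q (fun a k => p a k e) ℓ β₀ (i₀ - 1) = 1} = 0 := by
          exact hae1
        rw [Filter.eventually_iff, mem_ae_iff]
        have hsub : {e | hh Q (fun a k => p a k e) (ℓ+1) β₀ (i₀ - 1 + 1) = 1}ᶜ =
            T ⁻¹' {e | ¬ hh Q (fun a k => p a k e) ℓ β₀ (i₀ - 1) = 1} := by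
          ext e
          simp only [Set.mem_compl_iff, Set.mem_preimage, Set.mem_setOf_eq, hshift_pt e ℓ β₀ (i₀-1)]
        rw [hsub]
        apply le_antisymm _ zero_le
        calc P (T ⁻¹' {e | ¬ hh Q (fun a k => p a k e) ℓ β₀ (i₀ - 1) = 1})
            ≤ P (T ⁻¹' (toMeasurable P {e | ¬ hh Q (fun a k => p a k e) ℓ β₀ (i₀ - 1) = 1})) :=
              measure_mono (Set.preimage_mono (subset_toMeasurable _ _))
          _ = P (toMeasurable P {e | ¬ hh Q (fun a k => p a k e) ℓ β₀ (i₀ - 1) = 1}) :=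
              hT.toMeasurePreserving.measure_preimage
                (measurableSet_toMeasurable _ _).nullMeasurableSet
          _ = P {e | ¬ hh Q (fun a k => p a k e) ℓ β₀ (i₀ - 1) = 1} := measure_toMeasurable _
          _ = 0 := hbad
      have hae2 : ∀ᵐ e ∂P, hh Q (fun a k => p a k e) ℓ β₀ (i₀ - 1 + 1) = 1 := by
        refine haeT.mono fun e he => ?_
        have hle := hh_cross (ℓ := ℓ) (ℓ' := ℓ+1) hQ0 hQ1 (hfe e) (by omega)
          (α := β₀) (j := i₀ - 1 + 1) (by omega)
        have hub := hh_le_one (ℓ := ℓ) hQ0 hQ1 (hfe e) β₀ (i₀ - 1 + 1)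
        rw [he] at hle
        linarith
      have hprop : ∀ᵐ e ∂P, hh Q (fun a k => p a k e) ℓ α i = 1 := by
        refine (hae1.and hae2).mono fun e ⟨h1, h2⟩ => ?_
        exact propagate_left hQ0 hQ1 (hfe e) hirr (by omega : i₀ - 1 + 1 < ℓ) h1 h2 α i hi
      exact hprop.mono fun e he => (hone e ℓ α i).2 he
    · -- part 2, right of ℓ
      rintro ⟨α₀, i₀, hi₀, hae⟩ α i hi
      have hae0 : ∀ᵐ e ∂P, hh Q (fun a k => p a k e) ℓ α₀ i₀ = 1 :=
        hae.mono fun e he => (hone e ℓ α₀ i₀).1 he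
      obtain ⟨β₀, hβ₀⟩ := exists_pos_entry hQ0 hQ1 α₀
      have hae1 : ∀ᵐ e ∂P, hh Q (fun a k => p a k e) ℓ β₀ (i₀ + 1) = 1 := by
        refine hae0.mono fun e he => ?_
        have := (hh_harmonic_of_one hQ0 hQ1 (hfe e) he hβ₀).1
        rwa [hE, if_neg (by omega : ¬ i₀ + 1 = ℓ)] at this
      -- pull back through T using measurability
      set Good : Set E := {e | hh Q (fun a k => p a k e) (ℓ-1) β₀ (i₀ + 1 - 1) = 1} with hGood
      have hmeasG : MeasurableSet Good :=
        (measurable_hh_env Q p hpmeas (ℓ-1) hQ0 hQ1 hp01 β₀ (i₀ + 1 - 1))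
          (measurableSet_singleton 1)
      have hpre : T ⁻¹' Good = {e | hh Q (fun a k => p a k e) ℓ β₀ (i₀ + 1) = 1} := by
        ext e
        simp only [Set.mem_preimage, hGood, Set.mem_setOf_eq, hshift_pt e (ℓ-1) β₀ (i₀ + 1 - 1)]
        have e1 : ℓ - 1 + 1 = ℓ := by ring
        have e2 : i₀ + 1 - 1 + 1 = i₀ + 1 := by ring
        rw [e1, e2]
      have hPpre : P (T ⁻¹' Good) = 1 := by
        rw [hpre]
        have : MeasurableSet {e | hh Q (fun a k => p a k e) ℓ β₀ (i₀ + 1) = 1} :=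
          (measurable_hh_env Q p hpmeas ℓ hQ0 hQ1 hp01 β₀ (i₀ + 1))
            (measurableSet_singleton 1)
        rw [← prob_compl_eq_zero_iff this]
        exact hae1
      have hPGood : P Good = 1 := by
        rw [← hT.toMeasurePreserving.measure_preimage hmeasG.nullMeasurableSet]
        exact hPpre
      have haeG : ∀ᵐ e ∂P, hh Q (fun a k => p a k e) (ℓ-1) β₀ (i₀ + 1 - 1) = 1 := by
        rw [Filter.eventually_iff, mem_ae_iff]
        have : {e | hh Q (fun a k => p a k e) (ℓ-1) β₀ (i₀ + 1 - 1) = 1}ᶜ = Goodᶜ := rfl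
        rw [this, prob_compl_eq_zero_iff hmeasG]
        exact hPGood
      have hae2 : ∀ᵐ e ∂P, hh Q (fun a k => p a k e) ℓ β₀ (i₀ + 1 - 1) = 1 := by
        refine haeG.mono fun e he => ?_
        have hle := hh_cross' (ℓ := ℓ) (ℓ'' := ℓ-1) hQ0 hQ1 (hfe e) (by omega)
          (α := β₀) (j := i₀ + 1 - 1) (by omega)
        have hub := hh_le_one (ℓ := ℓ) hQ0 hQ1 (hfe e) β₀ (i₀ + 1 - 1)
        rw [he] at hle
        linarith
      have hprop : ∀ᵐ e ∂P, hh Q (fun a k => p a k e) ℓ α i = 1 := by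
        refine (hae2.and hae1).mono fun e he => ?_
        obtain ⟨h1, h2⟩ := he
        rw [(by ring : i₀ + 1 - 1 = i₀)] at h1
        exact propagate_right hQ0 hQ1 (hfe e) hirr hi₀ h1 h2 α i hi
      exact hprop.mono fun e he => (hone e ℓ α i).2 he


end Parrondo
end

section
/- Let (σ_i)_{i≥1} be a stationary ergodic sequence of strictly positive random variables with E|log σ_1| < ∞ and set u = E(log σ_1). Define U_n = σ_1 + σ_1σ_2 + ⋯ + σ_1σ_2⋯σ_n and s_n = σ_1σ_2⋯σ_n. Then almost surely (1/n)·log U_n → max(0, u) and (1/n)·log((1+U_n)/s_n) → max(0, −u) as n → ∞. -/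
open MeasureTheory Filter Matrix
open scoped ENNReal Topology

namespace Parrondo

set_option linter.unusedSectionVars false

section Birkhoff

variable {Ω : Type*} [MeasurableSpace Ω] {μ : Measure Ω} {T : Ω → Ω} {g : Ω → ℝ}

/-- Birkhoff sums. -/
noncomputable def bS (T : Ω → Ω) (g : Ω → ℝ) (n : ℕ) (x : Ω) : ℝ :=
  ∑ k ∈ Finset.range n, g (T^[k] x)

lemma bS_succ (T : Ω → Ω) (g : Ω → ℝ) (n : ℕ) (x : Ω) :
    bS T g (n + 1) x = g x + bS T g n (T x) := by
  rw [bS, Finset.sum_range_succ']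
  simp only [Function.iterate_succ_apply, Function.iterate_zero_apply]
  rw [add_comm]; rfl

lemma bS_meas (hT : Measurable T) (hg : Measurable g) (n : ℕ) :
    Measurable (bS T g n) := by
  unfold bS
  exact Finset.measurable_sum _ fun k _ => hg.comp (hT.iterate k)

/-- Maximal functions. -/
noncomputable def bPhi (T : Ω → Ω) (g : Ω → ℝ) : ℕ → Ω → ℝ
  | 0 => fun _ => 0
  | n + 1 => fun x => max 0 (g x + bPhi T g n (T x))

lemma bPhi_nonneg (T : Ω → Ω) (g : Ω → ℝ) (n : ℕ) (x : Ω) : 0 ≤ bPhi T g n x := by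
  cases n with
  | zero => simp [bPhi]
  | succ n => exact le_max_left _ _

lemma bPhi_mono (T : Ω → Ω) (g : Ω → ℝ) (n : ℕ) : ∀ x, bPhi T g n x ≤ bPhi T g (n + 1) x := by
  induction n with
  | zero => intro x; exact bPhi_nonneg T g 1 x
  | succ n ih =>
      intro x
      exact max_le_max le_rfl (add_le_add le_rfl (ih (T x)))

lemma bS_le_bPhi (T : Ω → Ω) (g : Ω → ℝ) (n : ℕ) : ∀ x, bS T g n x ≤ bPhi T g n x := by
  induction n with
  | zero => intro x; simp [bS, bPhi]
  | succ n ih =>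
      intro x
      rw [bS_succ]
      exact le_trans (add_le_add le_rfl (ih (T x))) (le_max_right _ _)

lemma bPhi_meas (hT : Measurable T) (hg : Measurable g) (n : ℕ) :
    Measurable (bPhi T g n) := by
  induction n with
  | zero => exact measurable_const
  | succ n ih => exact measurable_const.max (hg.add (ih.comp hT))

lemma bPhi_integrable (hT : MeasurePreserving T μ μ) (hg : Measurable g)
    (hgi : Integrable g μ) [IsFiniteMeasure μ] (n : ℕ) :
    Integrable (bPhi T g n) μ := by
  induction n with
  | zero => exact integrable_const 0
  | succ n ih =>
      have hcomp : Integrable (fun x => bPhi T g n (T x)) μ :=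
        (hT.integrable_comp (bPhi_meas hT.measurable hg n).aestronglyMeasurable).mpr ih
      have := (integrable_const (0 : ℝ)).sup (hgi.add hcomp)
      simpa [Pi.sup_def, bPhi] using this

lemma integral_comp_mp (hT : MeasurePreserving T μ μ) {f : Ω → ℝ}
    (hf : AEStronglyMeasurable f μ) : ∫ x, f (T x) ∂μ = ∫ x, f x ∂μ := by
  have hf' : AEStronglyMeasurable f (Measure.map T μ) := by rwa [hT.map_eq]
  conv_rhs => rw [← hT.map_eq]
  rw [integral_map hT.measurable.aemeasurable hf']

/-- The maximal ergodic theorem. -/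
lemma maximal_ergodic (hT : MeasurePreserving T μ μ) (hg : Measurable g)
    (hgi : Integrable g μ) [IsFiniteMeasure μ] :
    0 ≤ ∫ x in {x | ∃ n, 0 < bPhi T g n x}, g x ∂μ := by
  set A : ℕ → Set Ω := fun n => {x | 0 < bPhi T g (n + 1) x} with hA
  have hAmeas : ∀ n, MeasurableSet (A n) := fun n =>
    measurableSet_lt measurable_const (bPhi_meas hT.measurable hg (n + 1))
  have hAmono : Monotone A := by
    intro m n hmn x hx
    have : bPhi T g (m + 1) x ≤ bPhi T g (n + 1) x := by
      clear hx
      induction hmn with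
      | refl => rfl
      | step _ ih => exact le_trans ih (bPhi_mono T g _ x)
    exact lt_of_lt_of_le hx this
  have hAunion : (⋃ n, A n) = {x | ∃ n, 0 < bPhi T g n x} := by
    ext x
    simp only [Set.mem_iUnion, hA, Set.mem_setOf_eq]
    constructor
    · rintro ⟨n, hn⟩; exact ⟨n + 1, hn⟩
    · rintro ⟨n, hn⟩
      cases n with
      | zero => simp [bPhi] at hn
      | succ m => exact ⟨m, hn⟩
  have hstep : ∀ n, 0 ≤ ∫ x in A n, g x ∂μ := by
    intro n
    have hPhin := bPhi_integrable hT hg hgi n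
    have hPhisn := bPhi_integrable hT hg hgi (n + 1)
    have hPhiTn : Integrable (fun x => bPhi T g n (T x)) μ :=
      (hT.integrable_comp (bPhi_meas hT.measurable hg n).aestronglyMeasurable).mpr hPhin
    have hkey : ∀ x ∈ A n, g x = bPhi T g (n + 1) x - bPhi T g n (T x) := by
      intro x hx
      have hx' : 0 < max 0 (g x + bPhi T g n (T x)) := hx
      have : bPhi T g (n + 1) x = g x + bPhi T g n (T x) := by
        rcases max_cases 0 (g x + bPhi T g n (T x)) with ⟨h1, h2⟩ | ⟨h1, h2⟩
        · exact absurd (h1 ▸ hx') (lt_irrefl 0)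
        · exact h1
      rw [this]; ring
    have h1 : ∫ x in A n, g x ∂μ
        = ∫ x in A n, (bPhi T g (n + 1) x - bPhi T g n (T x)) ∂μ :=
      setIntegral_congr_fun (hAmeas n) hkey
    have h2 : ∫ x in A n, (bPhi T g (n + 1) x - bPhi T g n (T x)) ∂μ
        = ∫ x in A n, bPhi T g (n + 1) x ∂μ - ∫ x in A n, bPhi T g n (T x) ∂μ :=
      integral_sub hPhisn.integrableOn hPhiTn.integrableOn
    have h3 : ∫ x in A n, bPhi T g (n + 1) x ∂μ = ∫ x, bPhi T g (n + 1) x ∂μ := by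
      apply setIntegral_eq_integral_of_forall_compl_eq_zero
      intro x hx
      have h0 : ¬ (0 < bPhi T g (n + 1) x) := hx
      exact le_antisymm (not_lt.mp h0) (bPhi_nonneg T g (n + 1) x)
    have h4 : ∫ x in A n, bPhi T g n (T x) ∂μ ≤ ∫ x, bPhi T g n (T x) ∂μ :=
      setIntegral_le_integral hPhiTn (Filter.Eventually.of_forall fun x => bPhi_nonneg T g n (T x))
    have h5 : ∫ x, bPhi T g n (T x) ∂μ = ∫ x, bPhi T g n x ∂μ :=
      integral_comp_mp hT (bPhi_meas hT.measurable hg n).aestronglyMeasurable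
    have h6 : ∫ x, bPhi T g n x ∂μ ≤ ∫ x, bPhi T g (n + 1) x ∂μ :=
      integral_mono hPhin hPhisn (fun x => bPhi_mono T g n x)
    rw [h1, h2, h3]
    linarith
  have hlim := tendsto_setIntegral_of_monotone hAmeas hAmono
    (hAunion ▸ hgi.integrableOn : IntegrableOn g (⋃ n, A n) μ)
  rw [hAunion] at hlim
  exact ge_of_tendsto' hlim hstep

end Birkhoff

section Erg

variable {Ω : Type*} [MeasurableSpace Ω] {μ : Measure Ω} {T : Ω → Ω} {g : Ω → ℝ}

/-- One-sided Birkhoff bound. -/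
lemma birkhoff_upper [IsProbabilityMeasure μ] (hT : Ergodic T μ) (hg : Measurable g)
    (hgi : Integrable g μ) {ε : ℝ} (hε : 0 < ε) :
    ∀ᵐ x ∂μ, ∃ C : ℝ, ∀ n : ℕ, bS T g n x ≤ C + n * ((∫ y, g y ∂μ) + ε) := by
  set u : ℝ := ∫ y, g y ∂μ with hu
  set h : Ω → ℝ := fun x => g x - (u + ε) with hh
  have hmeas : Measurable h := hg.sub measurable_const
  have hint : Integrable h μ := hgi.sub (integrable_const _)
  have hinth : ∫ y, h y ∂μ = -ε := by
    rw [hh]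
    rw [integral_sub hgi (integrable_const _), integral_const]
    simp [hu]
  have hSh : ∀ n x, bS T h n x = bS T g n x - n * (u + ε) := by
    intro n x
    simp only [bS, hh, Finset.sum_sub_distrib, Finset.sum_const, Finset.card_range,
      nsmul_eq_mul]
  -- the invariant set of unbounded partial sums
  set F : Set Ω := ⋂ m : ℕ, ⋃ n : ℕ, {x | (m : ℝ) < bS T h n x} with hF
  have hFmeas : MeasurableSet F := by
    apply MeasurableSet.iInter; intro m
    apply MeasurableSet.iUnion; intro n
    exact measurableSet_lt measurable_const (bS_meas hT.toMeasurePreserving.measurable hmeas n)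
  have hFmem : ∀ x, x ∈ F ↔ ∀ m : ℕ, ∃ n : ℕ, (m : ℝ) < bS T h n x := by
    intro x; simp [hF]
  have hFinv : T ⁻¹' F = F := by
    ext x
    rw [Set.mem_preimage, hFmem, hFmem]
    constructor
    · intro hx m
      obtain ⟨m', hm'⟩ := exists_nat_ge ((m : ℝ) - h x)
      obtain ⟨n, hn⟩ := hx m'
      refine ⟨n + 1, ?_⟩
      rw [bS_succ]
      have : (m : ℝ) - h x ≤ m' := hm'
      linarith
    · intro hx m
      obtain ⟨m', hm'⟩ := exists_nat_ge ((m : ℝ) + h x)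
      obtain ⟨n, hn⟩ := hx m'
      cases n with
      | zero =>
          exfalso
          simp only [bS, Finset.range_zero, Finset.sum_empty] at hn
          have : (0 : ℝ) ≤ m' := Nat.cast_nonneg m'
          linarith
      | succ k =>
          refine ⟨k, ?_⟩
          rw [bS_succ] at hn
          linarith
  rcases hT.ae_empty_or_univ hFmeas hFinv with hF0 | hF1
  · -- F is null: a.e. bounded partial sums
    have : ∀ᵐ x ∂μ, x ∉ F := by
      have : μ F = 0 := by
        have := measure_congr hF0
        simpa using this
      exact (measure_eq_zero_iff_ae_notMem.mp this)
    filter_upwards [this] with x hx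
    rw [hFmem] at hx
    push_neg at hx
    obtain ⟨m, hm⟩ := hx
    refine ⟨m, fun n => ?_⟩
    have := hm n
    have h2 := hSh n x
    linarith
  · -- F is conull: contradiction with maximal ergodic theorem
    exfalso
    set A : Set Ω := {x | ∃ n, 0 < bPhi T h n x} with hA
    have hFA : F ⊆ A := by
      intro x hx
      rw [hFmem] at hx
      obtain ⟨n, hn⟩ := hx 0
      simp only [Nat.cast_zero] at hn
      exact ⟨n, lt_of_lt_of_le hn (bS_le_bPhi T h n x)⟩
    have hAconull : A =ᵐ[μ] Set.univ := by
      refine Filter.eventuallyEq_univ.mpr ?_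
      have hFuniv : ∀ᵐ x ∂μ, x ∈ F := by
        have := hF1
        rw [Filter.eventuallyEq_univ] at this
        exact this
      filter_upwards [hFuniv] with x hx using hFA hx
    have hmax := maximal_ergodic hT.toMeasurePreserving hmeas hint
    rw [← hA] at hmax
    have : ∫ x in A, h x ∂μ = ∫ x, h x ∂μ := by
      rw [Measure.restrict_congr_set hAconull, Measure.restrict_univ]
    rw [this, hinth] at hmax
    linarith

/-- Birkhoff's pointwise ergodic theorem. -/
lemma birkhoff_tendsto [IsProbabilityMeasure μ] (hT : Ergodic T μ) (hg : Measurable g)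
    (hgi : Integrable g μ) :
    ∀ᵐ x ∂μ, Tendsto (fun n : ℕ => bS T g n x / n) atTop (𝓝 (∫ y, g y ∂μ)) := by
  set u : ℝ := ∫ y, g y ∂μ with hu
  have hup : ∀ᵐ x ∂μ, ∀ m : ℕ, ∃ C : ℝ, ∀ n : ℕ,
      bS T g n x ≤ C + n * (u + 1 / (m + 1)) := by
    rw [ae_all_iff]
    intro m
    exact birkhoff_upper hT hg hgi (by positivity)
  have hneg : ∫ y, (-g) y ∂μ = -u := by simp only [Pi.neg_apply]; rw [integral_neg]
  have hdn : ∀ᵐ x ∂μ, ∀ m : ℕ, ∃ C : ℝ, ∀ n : ℕ,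
      -bS T g n x ≤ C + n * (-u + 1 / (m + 1)) := by
    rw [ae_all_iff]
    intro m
    have := birkhoff_upper hT hg.neg hgi.neg (ε := 1 / (m + 1)) (by positivity)
    rw [hneg] at this
    filter_upwards [this] with x hCx
    obtain ⟨C, hC⟩ := hCx
    refine ⟨C, fun n => ?_⟩
    have := hC n
    have hSneg : bS T (-g) n x = -bS T g n x := by
      simp [bS]
    linarith
  filter_upwards [hup, hdn] with x hx1 hx2
  rw [Metric.tendsto_atTop]
  intro ε hε
  obtain ⟨m, hm⟩ := exists_nat_one_div_lt (show (0:ℝ) < ε / 2 by linarith)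
  obtain ⟨C₁, hC₁⟩ := hx1 m
  obtain ⟨C₂, hC₂⟩ := hx2 m
  have h1 : Tendsto (fun n : ℕ => C₁ / n) atTop (𝓝 0) := tendsto_const_div_atTop_nhds_zero_nat C₁
  have h2 : Tendsto (fun n : ℕ => C₂ / n) atTop (𝓝 0) := tendsto_const_div_atTop_nhds_zero_nat C₂
  have he1 := h1.eventually (eventually_lt_nhds (show (0:ℝ) < ε / 2 by linarith))
  have he2 := h2.eventually (eventually_lt_nhds (show (0:ℝ) < ε / 2 by linarith))
  have := ((he1.and he2).and (eventually_ge_atTop 1))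
  rw [eventually_atTop] at this
  obtain ⟨N, hN⟩ := this
  refine ⟨N, fun n hn => ?_⟩
  obtain ⟨⟨hn1, hn2⟩, hn3⟩ := hN n hn
  have hnR : (0:ℝ) < n := by exact_mod_cast hn3
  rw [Real.dist_eq, abs_sub_lt_iff]
  have hmm : (1 : ℝ) / (m + 1) < ε / 2 := hm
  constructor
  · have := hC₁ n
    have hdiv : bS T g n x / n ≤ (C₁ + n * (u + 1 / (m + 1))) / n := by gcongr
    have heq : (C₁ + n * (u + 1 / (m + 1))) / n = C₁ / n + (u + 1 / (m + 1)) := by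
      field_simp
    rw [heq] at hdiv
    linarith
  · have := hC₂ n
    have hdiv : (-bS T g n x) / n ≤ (C₂ + n * (-u + 1 / (m + 1))) / n := by gcongr
    have heq : (C₂ + n * (-u + 1 / (m + 1))) / n = C₂ / n + (-u + 1 / (m + 1)) := by
      field_simp
    rw [heq, neg_div] at hdiv
    linarith

end Erg

lemma aux_div_le_div {a b c : ℝ} (h : a ≤ b) (hc : 0 < c) : a / c ≤ b / c := by gcongr

lemma log_add_nat_div_tendsto {c : ℝ} (hc : 0 ≤ c) :
    Tendsto (fun n : ℕ => Real.log (c + n) / n) atTop (𝓝 0) := by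
  have hat : Tendsto (fun n : ℕ => c + (n : ℝ)) atTop atTop :=
    tendsto_atTop_add_const_left _ c tendsto_natCast_atTop_atTop
  have h1 : Tendsto (fun n : ℕ => Real.log (c + n) / (c + n)) atTop (𝓝 0) :=
    (Real.isLittleO_log_id_atTop.tendsto_div_nhds_zero).comp hat
  have h2 : Tendsto (fun n : ℕ => (c + n) / n) atTop (𝓝 1) := by
    have hinv : Tendsto (fun n : ℕ => c / n) atTop (𝓝 0) :=
      tendsto_const_div_atTop_nhds_zero_nat c
    have : Tendsto (fun n : ℕ => c / n + 1) atTop (𝓝 (0 + 1)) :=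
      hinv.add tendsto_const_nhds
    rw [zero_add] at this
    apply this.congr'
    filter_upwards [eventually_ge_atTop 1] with n hn
    have hnR : (0:ℝ) < n := by exact_mod_cast hn
    field_simp
  have := h1.mul h2
  rw [zero_mul] at this
  apply this.congr'
  filter_upwards [eventually_ge_atTop 1] with n hn
  have hnR : (0:ℝ) < n := by exact_mod_cast hn
  have hcn : (0:ℝ) < c + n := by linarith
  field_simp

lemma key_log_sum (b : ℕ → ℝ) (hb : ∀ k, 0 < b k) (u c : ℝ) (hc : 0 ≤ c)
    (h : Tendsto (fun k : ℕ => Real.log (b k) / ((k : ℝ) + 1)) atTop (𝓝 u)) :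
    Tendsto (fun n : ℕ => Real.log (c + ∑ k ∈ Finset.range n, b k) / n) atTop
      (𝓝 (max 0 u)) := by
  set L := max 0 u with hL
  rw [Metric.tendsto_atTop]
  intro ε hε
  -- lower bound
  have hlow : Tendsto (fun n : ℕ => max (Real.log (b 0) / n) (Real.log (b (n - 1)) / n))
      atTop (𝓝 L) := by
    have h1 : Tendsto (fun n : ℕ => Real.log (b 0) / n) atTop (𝓝 0) :=
      tendsto_const_div_atTop_nhds_zero_nat _
    have h2 : Tendsto (fun n : ℕ => Real.log (b (n - 1)) / n) atTop (𝓝 u) := by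
      have := h.comp (tendsto_sub_atTop_nat 1)
      apply this.congr'
      filter_upwards [eventually_ge_atTop 1] with n hn
      simp only [Function.comp_apply]
      congr 1
      have : ((n - 1 : ℕ) : ℝ) = (n : ℝ) - 1 := by
        have : (1:ℕ) ≤ n := hn
        push_cast [Nat.cast_sub this]
        ring
      rw [this]
      ring
    exact h1.max h2
  have hεlow := hlow.eventually (eventually_gt_nhds (show L - ε < L by linarith))
  -- upper bound constants
  have hK : ∀ᶠ k : ℕ in atTop, Real.log (b k) / ((k : ℝ) + 1) ≤ u + ε / 4 :=
    h.eventually (eventually_le_nhds (show u < u + ε / 4 by linarith))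
  rw [eventually_atTop] at hK
  obtain ⟨K, hK⟩ := hK
  set C : ℝ := ∑ k ∈ Finset.range K, max 0 (Real.log (b k) - (u + ε / 4) * ((k : ℝ) + 1))
    with hCdef
  have hC0 : 0 ≤ C := Finset.sum_nonneg fun k _ => le_max_left _ _
  have hCb : ∀ k : ℕ, Real.log (b k) ≤ C + (u + ε / 4) * ((k : ℝ) + 1) := by
    intro k
    rcases lt_or_ge k K with hk | hk
    · have h1 : Real.log (b k) - (u + ε / 4) * ((k : ℝ) + 1) ≤ C := by
        refine le_trans (le_max_right 0 (Real.log (b k) - (u + ε / 4) * ((k : ℝ) + 1))) ?_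
        exact Finset.single_le_sum (f := fun i : ℕ => max 0 (Real.log (b i) - (u + ε / 4) * ((i : ℝ) + 1))) (fun i _ => le_max_left _ _) (Finset.mem_range.mpr hk)
      linarith
    · have h1 := hK k hk
      have hkpos : (0:ℝ) < (k : ℝ) + 1 := by positivity
      rw [div_le_iff₀ hkpos] at h1
      linarith
  set M := max 0 (u + ε / 4) with hMdef
  have hM0 : 0 ≤ M := le_max_left _ _
  have hM : M ≤ L + ε / 4 := by
    apply max_le
    · have : (0:ℝ) ≤ L := le_max_left _ _
      linarith
    · have : u ≤ L := le_max_right _ _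
      linarith
  -- pointwise upper bound
  have hub : ∀ n : ℕ, 1 ≤ n →
      Real.log (c + ∑ k ∈ Finset.range n, b k) / n ≤ (Real.log (c + n) + C) / n + M := by
    intro n hn
    have hnR : (0:ℝ) < n := by exact_mod_cast hn
    have hterm : ∀ k ∈ Finset.range n, b k ≤ Real.exp (C + n * M) := by
      intro k hk
      rw [Finset.mem_range] at hk
      have h2 : (u + ε / 4) * ((k : ℝ) + 1) ≤ n * M := by
        rcases le_or_gt (u + ε / 4) 0 with h3 | h3
        · have hle : (u + ε / 4) * ((k : ℝ) + 1) ≤ 0 :=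
            mul_nonpos_of_nonpos_of_nonneg h3 (by positivity)
          have : (0:ℝ) ≤ n * M := by positivity
          linarith
        · have hM' : M = u + ε / 4 := max_eq_right h3.le
          have hkn : ((k : ℝ) + 1) ≤ n := by exact_mod_cast hk
          rw [hM', mul_comm]
          exact mul_le_mul_of_nonneg_right hkn h3.le
      have h1 : Real.log (b k) ≤ C + n * M := by
        have := hCb k; linarith
      calc b k = Real.exp (Real.log (b k)) := (Real.exp_log (hb k)).symm
        _ ≤ Real.exp (C + n * M) := Real.exp_le_exp.2 h1
    have hsum : c + ∑ k ∈ Finset.range n, b k ≤ (c + n) * Real.exp (C + n * M) := by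
      have hs := Finset.sum_le_card_nsmul (Finset.range n) _ _ hterm
      rw [Finset.card_range, nsmul_eq_mul] at hs
      have hexp1 : (1:ℝ) ≤ Real.exp (C + n * M) := by
        rw [Real.one_le_exp_iff]
        positivity
      nlinarith
    have hpos : (0:ℝ) < c + ∑ k ∈ Finset.range n, b k := by
      have : (0:ℝ) < ∑ k ∈ Finset.range n, b k :=
        Finset.sum_pos (fun k _ => hb k) (Finset.nonempty_range_iff.mpr (by omega))
      linarith
    have hlog : Real.log (c + ∑ k ∈ Finset.range n, b k) ≤ Real.log (c + n) + C + n * M := by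
      calc Real.log (c + ∑ k ∈ Finset.range n, b k)
          ≤ Real.log ((c + n) * Real.exp (C + n * M)) := Real.log_le_log hpos hsum
        _ = Real.log (c + n) + (C + n * M) := by
            rw [Real.log_mul (by linarith : (0:ℝ) < c + (n:ℝ)).ne' (Real.exp_ne_zero _), Real.log_exp]
        _ = Real.log (c + n) + C + n * M := by ring
    have hdiv : Real.log (c + ∑ k ∈ Finset.range n, b k) / n
        ≤ (Real.log (c + n) + C + n * M) / n := by gcongr
    have heq : (Real.log (c + n) + C + n * M) / n = (Real.log (c + n) + C) / n + M := by
      field_simp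
    rw [heq] at hdiv
    exact hdiv
  -- upper tendsto
  have hub0 : Tendsto (fun n : ℕ => (Real.log (c + n) + C) / n) atTop (𝓝 0) := by
    have h1 := log_add_nat_div_tendsto hc
    have h2 := tendsto_const_div_atTop_nhds_zero_nat C
    have := h1.add h2
    rw [add_zero] at this
    apply this.congr
    intro n
    rw [add_div]
  have hεup := hub0.eventually (eventually_lt_nhds (show (0:ℝ) < ε / 2 by linarith))
  have hev := (hεlow.and (hεup.and (eventually_ge_atTop 1)))
  rw [eventually_atTop] at hev
  obtain ⟨N, hN⟩ := hev
  refine ⟨N, fun n hn => ?_⟩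
  obtain ⟨hl, hu', hn1⟩ := hN n hn
  have hnR : (0:ℝ) < n := by exact_mod_cast hn1
  rw [Real.dist_eq, abs_sub_lt_iff]
  constructor
  · have h1 := hub n hn1
    linarith
  · -- lower
    have hsum0 : ∀ k, k ∈ Finset.range n → (0:ℝ) ≤ b k := fun k _ => (hb k).le
    have hb0 : b 0 ≤ c + ∑ k ∈ Finset.range n, b k := by
      have := Finset.single_le_sum hsum0 (Finset.mem_range.mpr (by omega : 0 < n))
      linarith
    have hbn : b (n - 1) ≤ c + ∑ k ∈ Finset.range n, b k := by
      have := Finset.single_le_sum hsum0 (Finset.mem_range.mpr (by omega : n - 1 < n))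
      linarith
    have hlog0 : Real.log (b 0) / n ≤ Real.log (c + ∑ k ∈ Finset.range n, b k) / n :=
      aux_div_le_div (Real.log_le_log (hb 0) hb0) hnR
    have hlogn : Real.log (b (n - 1)) / n ≤ Real.log (c + ∑ k ∈ Finset.range n, b k) / n :=
      aux_div_le_div (Real.log_le_log (hb (n - 1)) hbn) hnR
    have := max_le hlog0 hlogn
    linarith

/-! ### Statement 18: asymptotics of `U_n` and `(1 + U_n)/s_n` -/

theorem stmt18_Un_asymptotics {Ω : Type*} [MeasurableSpace Ω]
    (μ : Measure Ω) [IsProbabilityMeasure μ]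
    (T : Ω → Ω) (hT : Ergodic T μ)
    (σ : Ω → ℝ) (hσmeas : Measurable σ) (hσpos : ∀ ω, 0 < σ ω)
    (hint : Integrable (fun ω => Real.log (σ ω)) μ)
    (u : ℝ) (hu : u = ∫ ω, Real.log (σ ω) ∂μ) :
    ∀ᵐ ω ∂μ,
      Tendsto (fun n : ℕ =>
          Real.log (∑ k ∈ Finset.range n, ∏ j ∈ Finset.range (k + 1), σ (T^[j] ω)) / n)
        atTop (𝓝 (max 0 u)) ∧
      Tendsto (fun n : ℕ =>
          Real.log ((1 + ∑ k ∈ Finset.range n, ∏ j ∈ Finset.range (k + 1), σ (T^[j] ω)) /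
            ∏ j ∈ Finset.range n, σ (T^[j] ω)) / n)
        atTop (𝓝 (max 0 (-u))) := by
  have hgmeas : Measurable (fun ω => Real.log (σ ω)) := Real.measurable_log.comp hσmeas
  have hbir := birkhoff_tendsto hT hgmeas hint
  filter_upwards [hbir] with ω hω
  rw [← hu] at hω
  set b : ℕ → ℝ := fun k => ∏ j ∈ Finset.range (k + 1), σ (T^[j] ω) with hbdef
  have hbpos : ∀ k, 0 < b k := fun k => Finset.prod_pos fun j _ => hσpos _
  have hprodpos : ∀ n : ℕ, 0 < ∏ j ∈ Finset.range n, σ (T^[j] ω) :=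
    fun n => Finset.prod_pos fun j _ => hσpos _
  have hlogprod : ∀ n : ℕ, Real.log (∏ j ∈ Finset.range n, σ (T^[j] ω))
      = bS T (fun ω => Real.log (σ ω)) n ω := by
    intro n
    rw [Real.log_prod (fun j _ => (hσpos _).ne')]
    rfl
  have hkey_in : Tendsto (fun k : ℕ => Real.log (b k) / ((k : ℝ) + 1)) atTop (𝓝 u) := by
    have h1 := hω.comp (tendsto_add_atTop_nat 1)
    apply h1.congr
    intro k
    simp only [Function.comp_apply]
    rw [show b k = ∏ j ∈ Finset.range (k + 1), σ (T^[j] ω) from rfl, hlogprod (k + 1)]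
    push_cast
    ring_nf
  have h1 := key_log_sum b hbpos u 0 le_rfl hkey_in
  have h2 := key_log_sum b hbpos u 1 zero_le_one hkey_in
  have hsumpos : ∀ n : ℕ, (0:ℝ) < 1 + ∑ k ∈ Finset.range n, b k := by
    intro n
    have : (0:ℝ) ≤ ∑ k ∈ Finset.range n, b k :=
      Finset.sum_nonneg fun k _ => (hbpos k).le
    linarith
  constructor
  · apply h1.congr
    intro n
    rw [zero_add]
  · have hlogs : Tendsto (fun n : ℕ =>
        Real.log (∏ j ∈ Finset.range n, σ (T^[j] ω)) / n) atTop (𝓝 u) := by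
      apply hω.congr
      intro n
      rw [hlogprod n]
    have h3 := h2.sub hlogs
    have hlim : max 0 u - u = max 0 (-u) := by
      rcases le_total 0 u with h | h
      · rw [max_eq_right h, max_eq_left (by linarith : -u ≤ 0), sub_self]
      · rw [max_eq_left h, max_eq_right (by linarith : (0:ℝ) ≤ -u), zero_sub]
    rw [hlim] at h3
    apply h3.congr
    intro n
    rw [← sub_div, ← Real.log_div (hsumpos n).ne' (hprodpos n).ne']

end Parrondo
end

section
/- The integral ∫_0^1 log((1−x)/x) · 1/(log 2 · (1+x)) dx equals (log 2)/2; equivalently, ∫_0^1 log((1−x)/x)/(1+x) dx = (log 2)²/2. Consequently, if p_0 has the Gauss measure with density f(x) = 1/(log 2 · (1+x)) on (0,1), which is invariant for the Gauss map T(e) = 1/e − ⌊1/e⌋, and σ_0 = (1−p_0)/p_0, then E(log σ_0) = (log 2)/2 > 0. -/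
open MeasureTheory Filter Matrix
open scoped ENNReal Topology

namespace Parrondo

section GaussAux
open Set Real

noncomputable def gm (x : ℝ) : ℝ := (1 - x) / (1 + x)

lemma gm_mem {x : ℝ} (hx : x ∈ Ioo (0:ℝ) 1) : gm x ∈ Ioo (0:ℝ) 1 := by
  obtain ⟨h0, h1⟩ := hx
  unfold gm
  constructor
  · exact div_pos (by linarith) (by linarith)
  · rw [div_lt_one (by linarith)]; linarith

lemma gm_invol {x : ℝ} (hx : x ∈ Ioo (0:ℝ) 1) : gm (gm x) = x := by
  obtain ⟨h0, h1⟩ := hx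
  unfold gm
  have hx1 : (1:ℝ) + x ≠ 0 := by linarith
  field_simp
  ring

lemma gm_image : gm '' Ioo (0:ℝ) 1 = Ioo (0:ℝ) 1 := by
  apply Subset.antisymm
  · rintro y ⟨x, hx, rfl⟩; exact gm_mem hx
  · intro y hy; exact ⟨gm y, gm_mem hy, gm_invol hy⟩

lemma gm_inj : InjOn gm (Ioo (0:ℝ) 1) := fun x hx y hy h => by
  rw [← gm_invol hx, ← gm_invol hy, h]

lemma gm_deriv : ∀ x ∈ Ioo (0:ℝ) 1,
    HasDerivWithinAt gm (-2 / (1 + x) ^ 2) (Ioo (0:ℝ) 1) x := by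
  intro x hx
  have hne : (1:ℝ) + x ≠ 0 := by have := hx.1; intro h; linarith
  have h1 : HasDerivAt (fun x : ℝ => 1 - x) (-1) x := by
    simpa using (hasDerivAt_id x).const_sub 1
  have h2 : HasDerivAt (fun x : ℝ => 1 + x) 1 x := by
    simpa using (hasDerivAt_id x).const_add 1
  have := (h1.div h2 hne).hasDerivWithinAt (s := Ioo (0:ℝ) 1)
  rw [show (-2 / (1 + x) ^ 2 : ℝ) = (-1 * (1 + x) - (1 - x) * 1) / (1 + x) ^ 2 by ring]
  exact this

lemma abs_log_le {x : ℝ} (h0 : 0 < x) (h1 : x ≤ 1) : |Real.log x| ≤ 2 * x ^ (-(1/2) : ℝ) := by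
  have ht : (0:ℝ) < x ^ (-(1/2) : ℝ) := Real.rpow_pos_of_pos h0 _
  have hlog : Real.log (x ^ (-(1/2) : ℝ)) = -(1/2) * Real.log x := Real.log_rpow h0 _
  have hub : Real.log (x ^ (-(1/2) : ℝ)) ≤ x ^ (-(1/2) : ℝ) - 1 := Real.log_le_sub_one_of_pos ht
  have hxle : Real.log x ≤ 0 := Real.log_nonpos (le_of_lt h0) h1
  rw [abs_of_nonpos hxle]
  nlinarith

lemma int_abs_log : IntegrableOn (fun x => |Real.log x|) (Ioo (0:ℝ) 1) := by
  have hmaj : IntegrableOn (fun x : ℝ => 2 * x ^ (-(1/2) : ℝ)) (Ioo (0:ℝ) 1) := by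
    have := (intervalIntegral.integrableOn_Ioo_rpow_iff (s := (-(1/2) : ℝ)) (t := (1:ℝ)) one_pos).mpr (by norm_num)
    exact this.const_mul 2
  apply MeasureTheory.Integrable.mono hmaj (Real.measurable_log.abs.aestronglyMeasurable)
  rw [ae_restrict_iff' measurableSet_Ioo]
  filter_upwards with x hx
  have h := abs_log_le hx.1 (le_of_lt hx.2)
  rw [Real.norm_eq_abs, Real.norm_eq_abs, abs_abs]
  refine h.trans (le_abs_self _)

lemma int_abs_log_one_sub : IntegrableOn (fun x => |Real.log (1 - x)|) (Ioo (0:ℝ) 1) := by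
  have him : (fun x : ℝ => 1 - x) '' Ioo (0:ℝ) 1 = Ioo (0:ℝ) 1 := by
    rw [Set.image_const_sub_Ioo]; norm_num
  have hd : ∀ x ∈ Ioo (0:ℝ) 1, HasDerivWithinAt (fun x : ℝ => 1 - x) (-1) (Ioo (0:ℝ) 1) x :=
    fun x _ => (by simpa using ((hasDerivAt_id x).const_sub 1) :
      HasDerivAt (fun x : ℝ => 1 - x) (-1) x).hasDerivWithinAt
  have hinj : InjOn (fun x : ℝ => 1 - x) (Ioo (0:ℝ) 1) := fun a _ b _ h => by
    dsimp at h; linarith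
  have := (integrableOn_image_iff_integrableOn_abs_deriv_smul measurableSet_Ioo hd hinj
    (fun x => |Real.log x|)).mp (by rw [him]; exact int_abs_log)
  simpa using this

noncomputable def fI (x : ℝ) : ℝ := Real.log ((1 - x) / x) / (1 + x)
noncomputable def gI (x : ℝ) : ℝ := Real.log (2 * x / (1 - x)) / (1 + x)

lemma fI_meas : Measurable fI :=
  (Real.measurable_log.comp ((measurable_const.sub measurable_id).div measurable_id)).div
    (measurable_const.add measurable_id)

lemma fI_int : IntegrableOn fI (Ioo (0:ℝ) 1) := by
  apply MeasureTheory.Integrable.mono (int_abs_log_one_sub.add int_abs_log)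
    fI_meas.aestronglyMeasurable
  rw [ae_restrict_iff' measurableSet_Ioo]
  filter_upwards with x hx
  obtain ⟨h0, h1⟩ := hx
  have hx1 : (1:ℝ) - x ≠ 0 := by linarith
  have hxne : x ≠ 0 := ne_of_gt h0
  have hden : (1:ℝ) ≤ 1 + x := by linarith
  rw [Real.norm_eq_abs, Real.norm_eq_abs, fI, Real.log_div hx1 hxne, abs_div,
    abs_of_pos (by linarith : (0:ℝ) < 1 + x)]
  have h2 : |Real.log (1 - x) - Real.log x| ≤ |Real.log (1 - x)| + |Real.log x| :=
    abs_sub _ _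
  have h3 : |Real.log (1 - x) - Real.log x| / (1 + x) ≤ |Real.log (1 - x) - Real.log x| := by
    apply div_le_self (abs_nonneg _) hden
  calc |Real.log (1 - x) - Real.log x| / (1 + x)
      ≤ |Real.log (1 - x) - Real.log x| := h3
    _ ≤ |Real.log (1 - x)| + |Real.log x| := h2
    _ ≤ |(|Real.log (1 - x)| + |Real.log x|)| := le_abs_self _

lemma gm_smul_eq {x : ℝ} (hx : x ∈ Ioo (0:ℝ) 1) :
    |(-2) / (1 + x) ^ 2| • fI (gm x) = gI x := by
  obtain ⟨h0, h1⟩ := hx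
  have hx1 : (1:ℝ) + x ≠ 0 := by linarith
  have hgx := gm_mem ⟨h0, h1⟩
  have hx2 : (1:ℝ) - x ≠ 0 := by linarith
  have harg : (1 - gm x) / gm x = 2 * x / (1 - x) := by
    unfold gm; field_simp; ring
  have hgden : 1 + gm x = 2 / (1 + x) := by
    unfold gm; field_simp; norm_num
  have habs : |(-2) / (1 + x) ^ 2| = 2 / (1 + x) ^ 2 := by
    rw [abs_div, abs_neg, abs_two, abs_of_pos (by positivity : (0:ℝ) < (1 + x) ^ 2)]
  rw [smul_eq_mul, habs, fI, harg, hgden, gI]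
  field_simp

lemma sub_eq : ∫ x in Ioo (0:ℝ) 1, fI x = ∫ x in Ioo (0:ℝ) 1, gI x := by
  have := MeasureTheory.integral_image_eq_integral_abs_deriv_smul measurableSet_Ioo
    gm_deriv gm_inj fI
  rw [gm_image] at this
  rw [this]
  exact setIntegral_congr_fun measurableSet_Ioo (fun x hx => gm_smul_eq hx)

lemma gI_int : IntegrableOn gI (Ioo (0:ℝ) 1) := by
  have := (MeasureTheory.integrableOn_image_iff_integrableOn_abs_deriv_smul measurableSet_Ioo
    gm_deriv gm_inj fI).mp (by rw [gm_image]; exact fI_int)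
  exact IntegrableOn.congr_fun this (fun x hx => gm_smul_eq hx) measurableSet_Ioo

lemma add_eq : ∀ x ∈ Ioo (0:ℝ) 1, fI x + gI x = Real.log 2 / (1 + x) := by
  intro x ⟨h0, h1⟩
  have hx1 : (1:ℝ) - x ≠ 0 := by linarith
  have hxne : x ≠ 0 := ne_of_gt h0
  have h2x : (2:ℝ) * x ≠ 0 := by positivity
  rw [fI, gI, ← add_div, Real.log_div hx1 hxne, Real.log_div h2x hx1,
    Real.log_mul two_ne_zero hxne]
  ring_nf

lemma log2_integral : ∫ x in Ioo (0:ℝ) 1, Real.log 2 / (1 + x) = Real.log 2 * Real.log 2 := by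
  rw [← integral_Ioc_eq_integral_Ioo, ← intervalIntegral.integral_of_le zero_le_one]
  have : ∀ x : ℝ, Real.log 2 / (1 + x) = Real.log 2 * (fun u : ℝ => 1 / u) (x + 1) := by
    intro x; simp [add_comm]; ring
  simp_rw [this]
  rw [intervalIntegral.integral_const_mul, intervalIntegral.integral_comp_add_right]
  norm_num

lemma main_integral : ∫ x in Ioo (0:ℝ) 1, fI x = Real.log 2 ^ 2 / 2 := by
  have hsum : ∫ x in Ioo (0:ℝ) 1, (fI x + gI x) =
      (∫ x in Ioo (0:ℝ) 1, fI x) + ∫ x in Ioo (0:ℝ) 1, gI x :=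
    integral_add fI_int gI_int
  have h2 : ∫ x in Ioo (0:ℝ) 1, (fI x + gI x) = Real.log 2 * Real.log 2 := by
    rw [setIntegral_congr_fun measurableSet_Ioo (fun x hx => add_eq x hx)]
    exact log2_integral
  rw [← sub_eq] at hsum
  have hp : Real.log 2 ^ 2 = Real.log 2 * Real.log 2 := by ring
  linarith

lemma part2 : (∫ x in Set.Ioo (0 : ℝ) 1, Real.log ((1 - x) / x) / (1 + x)) = Real.log 2 ^ 2 / 2 :=
  main_integral

lemma part1 : (∫ x in Set.Ioo (0 : ℝ) 1,
    Real.log ((1 - x) / x) * (1 / (Real.log 2 * (1 + x)))) = Real.log 2 / 2 := by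
  have hrw : ∀ x : ℝ, Real.log ((1 - x) / x) * (1 / (Real.log 2 * (1 + x))) =
      (Real.log 2)⁻¹ * fI x := by
    intro x
    simp only [fI, div_eq_mul_inv, one_mul, mul_inv]
    ring
  simp_rw [hrw]
  rw [MeasureTheory.integral_const_mul, main_integral]
  have hl : Real.log 2 ≠ 0 := ne_of_gt (Real.log_pos one_lt_two)
  field_simp

end GaussAux
/-! ### Statement 19: the integral in Example `ex:contfraction` -/

theorem stmt19_gauss_integral :
    (∫ x in Set.Ioo (0 : ℝ) 1,
        Real.log ((1 - x) / x) * (1 / (Real.log 2 * (1 + x)))) = Real.log 2 / 2 ∧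
    (∫ x in Set.Ioo (0 : ℝ) 1, Real.log ((1 - x) / x) / (1 + x)) = Real.log 2 ^ 2 / 2 ∧
    ∀ ν : Measure ℝ,
      ν = (volume.restrict (Set.Ioo (0 : ℝ) 1)).withDensity
          (fun x => ENNReal.ofReal (1 / (Real.log 2 * (1 + x)))) →
      (∫ x, Real.log ((1 - x) / x) ∂ν) = Real.log 2 / 2 ∧ 0 < Real.log 2 / 2 := by
  have hpos : 0 < Real.log 2 / 2 := by
    have := Real.log_pos one_lt_two
    linarith
  refine ⟨part1, part2, fun ν hν => ⟨?_, hpos⟩⟩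
  subst hν
  have hd : Measurable fun x : ℝ => (1 / (Real.log 2 * (1 + x))).toNNReal :=
    (measurable_const.div (measurable_const.mul (measurable_const.add measurable_id))).real_toNNReal
  have hden : (fun x : ℝ => ENNReal.ofReal (1 / (Real.log 2 * (1 + x)))) =
      fun x : ℝ => ((1 / (Real.log 2 * (1 + x))).toNNReal : ℝ≥0∞) := rfl
  rw [hden, _root_.integral_withDensity_eq_integral_smul hd]
  rw [← part1]
  apply MeasureTheory.setIntegral_congr_fun measurableSet_Ioo
  intro x hx
  have hnn : 0 ≤ 1 / (Real.log 2 * (1 + x)) := by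
    have h1 : (0:ℝ) < Real.log 2 := Real.log_pos one_lt_two
    have h2 : (0:ℝ) < 1 + x := by have := hx.1; linarith
    positivity
  simp only [NNReal.smul_def, Real.coe_toNNReal _ hnn, smul_eq_mul]
  ring

end Parrondo
end
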